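/- arXiv:2106.07106 — 8 statements merged into one kernel-verified Lean document; each statement's English description precedes it below -/
import Mathlib

section
/- Two connected undirected weighted networks G₁ = (U,E₁,w₁) and G₂ = (U,E₂,w₂) on the same vertex set have identical random-walk transition kernels if and only if they are equivalent, i.e. E₁ = E₂ and there exists a constant C > 0 with w₁(u,u') = C·w₂(u,u') for all u,u' ∈ U. -/
/-- Two connected undirected weighted networks on the same vertex set have
identical random-walk transition kernels `P(u'|u) = w(u,u')/d(u)` if and only if they are
equivalent: same edge set (edges are the pairs of positive weight) and weights equal up to
a positive multiplicative constant. -/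
theorem network_equivalence_iff_same_random_walk
    {U : Type*} [Fintype U]
    (w₁ w₂ : U → U → ℝ)
    (h1nn : ∀ u u', 0 ≤ w₁ u u') (h2nn : ∀ u u', 0 ≤ w₂ u u')
    (h1sym : ∀ u u', w₁ u u' = w₁ u' u) (h2sym : ∀ u u', w₂ u u' = w₂ u' u)
    (h1conn : ∀ u u' : U, Relation.ReflTransGen (fun a b => 0 < w₁ a b) u u')
    (h2conn : ∀ u u' : U, Relation.ReflTransGen (fun a b => 0 < w₂ a b) u u')
    (h1deg : ∀ u, 0 < ∑ u', w₁ u u') (h2deg : ∀ u, 0 < ∑ u', w₂ u u') :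
    (∀ u u', w₁ u u' / (∑ u0, w₁ u u0) = w₂ u u' / (∑ u0, w₂ u u0))
    ↔ ((∀ u u', 0 < w₁ u u' ↔ 0 < w₂ u u')
        ∧ ∃ C > (0 : ℝ), ∀ u u', w₁ u u' = C * w₂ u u') := by
  constructor
  · intro h
    set r : U → ℝ := fun u => (∑ u0, w₁ u u0) / (∑ u0, w₂ u u0) with hr
    have rpos : ∀ u, 0 < r u := fun u => div_pos (h1deg u) (h2deg u)
    have key : ∀ u u', w₁ u u' = r u * w₂ u u' := by
      intro u u'
      have hd1 := (h1deg u).ne'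
      have hd2 := (h2deg u).ne'
      have hh := h u u'
      rw [div_eq_div_iff hd1 hd2] at hh
      simp only [hr]
      field_simp
      linarith
    have hiff : ∀ u u', 0 < w₁ u u' ↔ 0 < w₂ u u' := by
      intro u u'
      rw [key u u']
      constructor
      · intro hp
        rcases (h2nn u u').lt_or_eq with h' | h'
        · exact h'
        · exfalso; rw [← h'] at hp; simp at hp
      · intro hp; exact mul_pos (rpos u) hp
    refine ⟨hiff, ?_⟩
    cases isEmpty_or_nonempty U with
    | inl he => exact ⟨1, one_pos, fun u => (he.false u).elim⟩
    | inr hne =>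
      obtain ⟨u₀⟩ := hne
      have step : ∀ u u', 0 < w₂ u u' → r u = r u' := by
        intro u u' hw
        have e1 := key u u'
        have e2 := key u' u
        rw [h1sym u' u, h2sym u' u] at e2
        have : r u * w₂ u u' = r u' * w₂ u u' := by linarith
        exact mul_right_cancel₀ hw.ne' this
      have const : ∀ u, r u = r u₀ := by
        intro u
        induction h2conn u₀ u with
        | refl => rfl
        | tail hab hbc ih => exact ((step _ _ hbc).symm).trans ih
      exact ⟨r u₀, rpos u₀, fun u u' => by rw [key u u', const u]⟩
  · rintro ⟨_, C, hC, hw⟩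
    intro u u'
    simp only [hw, ← Finset.mul_sum]
    rw [mul_div_mul_left _ _ (ne_of_gt hC)]
end

section
/- Let G₁ and G₂ be connected undirected networks on the same vertex set U with weight functions w₁, w₂ and the same total degree D. Under the zero-one cost c(u,u') = 1{u ≠ u'}, the NetOTC cost satisfies ρ(G₁,G₂) ≥ (1/(4D)) ∑_{u,u'∈U} |w₁(u,u') − w₂(u,u')|. -/
/-- `(lam, R)` is a stationary transition coupling of the Markov kernels `P` and `Q`
whose one-dimensional marginals are the stationary distributions `p` and `q`. -/
def IsTCStat {U V : Type*} [Fintype U] [Fintype V]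
    (P : U → U → ℝ) (Q : V → V → ℝ) (p : U → ℝ) (q : V → ℝ)
    (lam : U × V → ℝ) (R : U × V → U × V → ℝ) : Prop :=
  (∀ a b, 0 ≤ R a b) ∧
  (∀ (a : U × V) (u' : U), ∑ v' : V, R a (u', v') = P a.1 u') ∧
  (∀ (a : U × V) (v' : V), ∑ u' : U, R a (u', v') = Q a.2 v') ∧
  (∀ a, 0 ≤ lam a) ∧ (∑ a : U × V, lam a = 1) ∧
  (∀ b : U × V, ∑ a : U × V, lam a * R a b = lam b) ∧
  (∀ u, ∑ v, lam (u, v) = p u) ∧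
  (∀ v, ∑ u, lam (u, v) = q v)

private lemma div_cancel_aux (w d D : ℝ) (hd : d ≠ 0) : d / D * (w / d) = w / D := by
  rw [div_mul_div_comm, mul_comm d w, mul_div_mul_right _ _ hd]

/-- For connected undirected networks `G₁`, `G₂` on the same vertex set `U`
with degree functions `d₁, d₂` and common total degree `D`, under the zero-one cost the
NetOTC cost satisfies `ρ(G₁,G₂) ≥ (1/(4D)) ∑_{u,u} |w₁(u,u) − w₂(u,u)|`.  Here the random walk on
`Gᵢ` has kernel `wᵢ(u,u')/dᵢ(u)` and stationary distribution `dᵢ(u)/D`. -/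
theorem netotc_weight_lower_bound
    {U : Type*} [Fintype U] [DecidableEq U]
    (w₁ w₂ : U → U → ℝ) (D : ℝ)
    (h1nn : ∀ u u', 0 ≤ w₁ u u') (h2nn : ∀ u u', 0 ≤ w₂ u u')
    (h1sym : ∀ u u', w₁ u u' = w₁ u' u) (h2sym : ∀ u u', w₂ u u' = w₂ u' u)
    (h1conn : ∀ u u' : U, Relation.ReflTransGen (fun a b => 0 < w₁ a b) u u')
    (h2conn : ∀ u u' : U, Relation.ReflTransGen (fun a b => 0 < w₂ a b) u u')
    (h1deg : ∀ u, 0 < ∑ u', w₁ u u') (h2deg : ∀ u, 0 < ∑ u', w₂ u u')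
    (hD1 : ∑ u, ∑ u', w₁ u u' = D) (hD2 : ∑ u, ∑ u', w₂ u u' = D) :
    sInf {x : ℝ | ∃ (lam : U × U → ℝ) (R : U × U → U × U → ℝ),
        IsTCStat (fun u u' => w₁ u u' / ∑ a, w₁ u a)
          (fun u u' => w₂ u u' / ∑ a, w₂ u a)
          (fun u => (∑ u', w₁ u u') / D) (fun u => (∑ u', w₂ u u') / D) lam R ∧
        x = ∑ a : U × U, lam a * (if a.1 = a.2 then (0 : ℝ) else 1)}
    ≥ (1 / (4 * D)) * ∑ u, ∑ u', |w₁ u u' - w₂ u u'| := by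
  rcases isEmpty_or_nonempty U with hU | hU
  · have hempty : {x : ℝ | ∃ (lam : U × U → ℝ) (R : U × U → U × U → ℝ),
        IsTCStat (fun u u' => w₁ u u' / ∑ a, w₁ u a)
          (fun u u' => w₂ u u' / ∑ a, w₂ u a)
          (fun u => (∑ u', w₁ u u') / D) (fun u => (∑ u', w₂ u u') / D) lam R ∧
        x = ∑ a : U × U, lam a * (if a.1 = a.2 then (0 : ℝ) else 1)} = ∅ := by
      ext x
      simp only [Set.mem_setOf_eq, Set.mem_empty_iff_false, iff_false, not_exists]
      rintro lam R ⟨⟨_, _, _, _, hsum, _, _, _⟩, _⟩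
      simp at hsum
    rw [hempty, Real.sInf_empty]
    simp
  have hDpos : 0 < D := by
    rw [← hD1]
    exact Finset.sum_pos (fun u _ => h1deg u) Finset.univ_nonempty
  -- notation
  set P : U → U → ℝ := fun u u' => w₁ u u' / ∑ a, w₁ u a with hPdef
  set Q : U → U → ℝ := fun u u' => w₂ u u' / ∑ a, w₂ u a with hQdef
  set p : U → ℝ := fun u => (∑ u', w₁ u u') / D with hpdef
  set q : U → ℝ := fun u => (∑ u', w₂ u u') / D with hqdef
  have hPnn : ∀ u u', 0 ≤ P u u' := fun u u' =>
    div_nonneg (h1nn u u') (h1deg u).le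
  have hQnn : ∀ u u', 0 ≤ Q u u' := fun u u' =>
    div_nonneg (h2nn u u') (h2deg u).le
  have hpnn : ∀ u, 0 ≤ p u := fun u => div_nonneg (h1deg u).le hDpos.le
  have hqnn : ∀ u, 0 ≤ q u := fun u => div_nonneg (h2deg u).le hDpos.le
  have hProw : ∀ u, ∑ u', P u u' = 1 := fun u => by
    simp only [hPdef]
    rw [← Finset.sum_div]
    exact div_self (h1deg u).ne'
  have hQrow : ∀ u, ∑ u', Q u u' = 1 := fun u => by
    simp only [hQdef]
    rw [← Finset.sum_div]
    exact div_self (h2deg u).ne'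
  have hpsum : ∑ u, p u = 1 := by
    simp only [hpdef]
    rw [← Finset.sum_div, hD1]
    exact div_self hDpos.ne'
  have hqsum : ∑ u, q u = 1 := by
    simp only [hqdef]
    rw [← Finset.sum_div, hD2]
    exact div_self hDpos.ne'
  have hpP : ∀ u u', p u * P u u' = w₁ u u' / D := fun u u' => by
    simp only [hpdef, hPdef]
    exact div_cancel_aux _ _ _ (h1deg u).ne'
  have hqQ : ∀ u u', q u * Q u u' = w₂ u u' / D := fun u u' => by
    simp only [hqdef, hQdef]
    exact div_cancel_aux _ _ _ (h2deg u).ne'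
  have hstat1 : ∀ u', ∑ u, p u * P u u' = p u' := fun u' => by
    calc ∑ u, p u * P u u' = ∑ u, w₁ u u' / D :=
          Finset.sum_congr rfl fun u _ => hpP u u'
      _ = (∑ u, w₁ u' u) / D := by
          rw [← Finset.sum_div]
          congr 1
          exact Finset.sum_congr rfl fun u _ => h1sym u u'
      _ = p u' := rfl
  have hstat2 : ∀ u', ∑ u, q u * Q u u' = q u' := fun u' => by
    calc ∑ u, q u * Q u u' = ∑ u, w₂ u u' / D :=
          Finset.sum_congr rfl fun u _ => hqQ u u'
      _ = (∑ u, w₂ u' u) / D := by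
          rw [← Finset.sum_div]
          congr 1
          exact Finset.sum_congr rfl fun u _ => h2sym u u'
      _ = q u' := rfl
  -- nonemptiness via independent coupling
  have hne : Set.Nonempty {x : ℝ | ∃ (lam : U × U → ℝ) (R : U × U → U × U → ℝ),
      IsTCStat P Q p q lam R ∧
      x = ∑ a : U × U, lam a * (if a.1 = a.2 then (0 : ℝ) else 1)} := by
    refine ⟨_, fun a => p a.1 * q a.2, fun a b => P a.1 b.1 * Q a.2 b.2,
      ⟨?_, ?_, ?_, ?_, ?_, ?_, ?_, ?_⟩, rfl⟩
    · exact fun a b => mul_nonneg (hPnn _ _) (hQnn _ _)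
    · intro a u'
      dsimp only
      rw [← Finset.mul_sum, hQrow, mul_one]
    · intro a v'
      dsimp only
      rw [← Finset.sum_mul, hProw, one_mul]
    · exact fun a => mul_nonneg (hpnn _) (hqnn _)
    · dsimp only
      rw [Fintype.sum_prod_type]
      calc ∑ u, ∑ v, p u * q v = ∑ u, p u * ∑ v, q v :=
            Finset.sum_congr rfl fun u _ => (Finset.mul_sum _ _ _).symm
        _ = 1 := by rw [hqsum]; simp only [mul_one]; exact hpsum
    · intro b
      dsimp only
      rw [Fintype.sum_prod_type]
      calc ∑ u, ∑ v, p u * q v * (P u b.1 * Q v b.2)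
          = ∑ u, ∑ v, (p u * P u b.1) * (q v * Q v b.2) := by
            refine Finset.sum_congr rfl fun u _ => Finset.sum_congr rfl fun v _ => by ring
        _ = (∑ u, p u * P u b.1) * (∑ v, q v * Q v b.2) := (Finset.sum_mul_sum _ _ _ _).symm
        _ = p b.1 * q b.2 := by rw [hstat1, hstat2]
    · intro u
      dsimp only
      rw [← Finset.mul_sum, hqsum, mul_one]
    · intro v
      dsimp only
      rw [← Finset.sum_mul, hpsum, one_mul]
  rw [ge_iff_le]
  refine le_csInf hne ?_
  rintro x ⟨lam, R, ⟨hRnn, hR1, hR2, hlnn, hlsum, hstat, hm1, hm2⟩, rfl⟩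
  -- block coupling
  set σ : U × U → U × U → ℝ := fun b c => lam (b.1, c.1) * R (b.1, c.1) (b.2, c.2) with hσdef
  have hσnn : ∀ b c, 0 ≤ σ b c := fun b c => mul_nonneg (hlnn _) (hRnn _ _)
  have hRrow : ∀ a : U × U, ∑ u', ∑ v', R a (u', v') = 1 := fun a => by
    calc ∑ u', ∑ v', R a (u', v') = ∑ u', P a.1 u' :=
          Finset.sum_congr rfl fun u' _ => hR1 a u'
      _ = 1 := hProw a.1
  have hσ1 : ∀ b : U × U, ∑ c : U × U, σ b c = w₁ b.1 b.2 / D := by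
    intro b
    rw [Fintype.sum_prod_type]
    calc ∑ v, ∑ v', σ b (v, v')
        = ∑ v, lam (b.1, v) * P b.1 b.2 := by
          refine Finset.sum_congr rfl fun v _ => ?_
          simp only [hσdef]
          rw [← Finset.mul_sum, hR1 (b.1, v) b.2]
      _ = (∑ v, lam (b.1, v)) * P b.1 b.2 := (Finset.sum_mul _ _ _).symm
      _ = p b.1 * P b.1 b.2 := by rw [hm1]
      _ = w₁ b.1 b.2 / D := hpP _ _
  have hσ2 : ∀ c : U × U, ∑ b : U × U, σ b c = w₂ c.1 c.2 / D := by
    intro c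
    rw [Fintype.sum_prod_type]
    calc ∑ u, ∑ u', σ (u, u') c
        = ∑ u, lam (u, c.1) * Q c.1 c.2 := by
          refine Finset.sum_congr rfl fun u _ => ?_
          simp only [hσdef]
          rw [← Finset.mul_sum, hR2 (u, c.1) c.2]
      _ = (∑ u, lam (u, c.1)) * Q c.1 c.2 := (Finset.sum_mul _ _ _).symm
      _ = q c.1 * Q c.1 c.2 := by rw [hm2]
      _ = w₂ c.1 c.2 / D := hqQ _ _
  have hμtot : ∑ b : U × U, w₁ b.1 b.2 / D = 1 := by
    rw [Fintype.sum_prod_type]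
    simp only [← Finset.sum_div]
    rw [hD1]
    exact div_self hDpos.ne'
  have hνtot : ∑ b : U × U, w₂ b.1 b.2 / D = 1 := by
    rw [Fintype.sum_prod_type]
    simp only [← Finset.sum_div]
    rw [hD2]
    exact div_self hDpos.ne'
  have hσtot : ∑ b : U × U, ∑ c : U × U, σ b c = 1 := by
    rw [Finset.sum_congr rfl fun b _ => hσ1 b, hμtot]
  set T : ℝ := ∑ b : U × U, σ b b with hTdef
  set C : ℝ := ∑ a : U × U, lam a * (if a.1 = a.2 then (0 : ℝ) else 1) with hCdef
  have hdiag1 : ∀ b : U × U, σ b b ≤ w₁ b.1 b.2 / D := fun b => by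
    rw [← hσ1 b]
    exact Finset.single_le_sum (fun c _ => hσnn b c) (Finset.mem_univ b)
  have hdiag2 : ∀ b : U × U, σ b b ≤ w₂ b.1 b.2 / D := fun b => by
    rw [← hσ2 b]
    exact Finset.single_le_sum (fun a _ => hσnn a b) (Finset.mem_univ b)
  -- cost identities
  have hcost1 : ∑ b : U × U, ∑ c : U × U, σ b c * (if b.1 = c.1 then (0:ℝ) else 1) = C := by
    calc ∑ b : U × U, ∑ c : U × U, σ b c * (if b.1 = c.1 then (0:ℝ) else 1)
        = ∑ u, ∑ u', ∑ v, ∑ v', σ (u, u') (v, v') * (if u = v then (0:ℝ) else 1) := by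
          rw [Fintype.sum_prod_type]
          exact Finset.sum_congr rfl fun u _ => Finset.sum_congr rfl fun u' _ =>
            Fintype.sum_prod_type _
      _ = ∑ u, ∑ v, lam (u, v) * (if u = v then (0:ℝ) else 1) := by
          refine Finset.sum_congr rfl fun u _ => ?_
          rw [Finset.sum_comm]
          refine Finset.sum_congr rfl fun v _ => ?_
          calc ∑ u', ∑ v', σ (u, u') (v, v') * (if u = v then (0:ℝ) else 1)
              = (lam (u, v) * (if u = v then (0:ℝ) else 1)) * ∑ u', ∑ v', R (u, v) (u', v') := by
                rw [Finset.mul_sum]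
                refine Finset.sum_congr rfl fun u' _ => ?_
                rw [Finset.mul_sum]
                refine Finset.sum_congr rfl fun v' _ => ?_
                simp only [hσdef]
                ring
            _ = lam (u, v) * (if u = v then (0:ℝ) else 1) := by rw [hRrow, mul_one]
      _ = C := by rw [hCdef, Fintype.sum_prod_type]
  have hcost2 : ∑ b : U × U, ∑ c : U × U, σ b c * (if b.2 = c.2 then (0:ℝ) else 1) = C := by
    calc ∑ b : U × U, ∑ c : U × U, σ b c * (if b.2 = c.2 then (0:ℝ) else 1)
        = ∑ u, ∑ u', ∑ v, ∑ v', σ (u, u') (v, v') * (if u' = v' then (0:ℝ) else 1) := by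
          rw [Fintype.sum_prod_type]
          exact Finset.sum_congr rfl fun u _ => Finset.sum_congr rfl fun u' _ =>
            Fintype.sum_prod_type _
      _ = ∑ u', ∑ u, ∑ v, ∑ v', σ (u, u') (v, v') * (if u' = v' then (0:ℝ) else 1) :=
          Finset.sum_comm
      _ = ∑ u', ∑ v', lam (u', v') * (if u' = v' then (0:ℝ) else 1) := by
          refine Finset.sum_congr rfl fun u' _ => ?_
          rw [show (∑ u, ∑ v, ∑ v', σ (u, u') (v, v') * (if u' = v' then (0:ℝ) else 1))
              = ∑ v', ∑ u, ∑ v, σ (u, u') (v, v') * (if u' = v' then (0:ℝ) else 1) from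
            (Finset.sum_congr rfl fun u _ => Finset.sum_comm).trans Finset.sum_comm]
          refine Finset.sum_congr rfl fun v' _ => ?_
          calc ∑ u, ∑ v, σ (u, u') (v, v') * (if u' = v' then (0:ℝ) else 1)
              = (∑ u, ∑ v, lam (u, v) * R (u, v) (u', v')) * (if u' = v' then (0:ℝ) else 1) := by
                rw [Finset.sum_mul]
                refine Finset.sum_congr rfl fun u _ => ?_
                rw [Finset.sum_mul]
            _ = lam (u', v') * (if u' = v' then (0:ℝ) else 1) := by
                have h := hstat (u', v')
                rw [Fintype.sum_prod_type] at h
                rw [h]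
      _ = C := by rw [hCdef, Fintype.sum_prod_type]
  have hkey : 1 - T ≤ 2 * C := by
    have h2C : 2 * C = ∑ b : U × U, ∑ c : U × U,
        σ b c * ((if b.1 = c.1 then (0:ℝ) else 1) + (if b.2 = c.2 then (0:ℝ) else 1)) := by
      simp only [mul_add, Finset.sum_add_distrib, hcost1, hcost2]
      ring
    have hT : T = ∑ b : U × U, ∑ c : U × U, (if b = c then σ b c else 0) := by
      rw [hTdef]
      exact Finset.sum_congr rfl fun b _ => (by simp)
    have hmain : (∑ b : U × U, ∑ c : U × U, σ b c) - T ≤ 2 * C := by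
      rw [h2C, hT, ← Finset.sum_sub_distrib]
      refine Finset.sum_le_sum fun b _ => ?_
      rw [← Finset.sum_sub_distrib]
      refine Finset.sum_le_sum fun c _ => ?_
      by_cases h : b = c
      · rw [if_pos h, sub_self]
        refine mul_nonneg (hσnn b c) ?_
        have h1 : (0:ℝ) ≤ if b.1 = c.1 then (0:ℝ) else 1 := by positivity
        have h2 : (0:ℝ) ≤ if b.2 = c.2 then (0:ℝ) else 1 := by positivity
        linarith
      · rw [if_neg h, sub_zero]
        have hor : b.1 ≠ c.1 ∨ b.2 ≠ c.2 := by
          by_contra h'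
          push_neg at h'
          exact h (Prod.ext h'.1 h'.2)
        have h1 : (1:ℝ) ≤ (if b.1 = c.1 then (0:ℝ) else 1) + (if b.2 = c.2 then (0:ℝ) else 1) := by
          rcases hor with h' | h'
          · rw [if_neg h']
            have : (0:ℝ) ≤ if b.2 = c.2 then (0:ℝ) else 1 := by positivity
            linarith
          · rw [if_neg h']
            have : (0:ℝ) ≤ if b.1 = c.1 then (0:ℝ) else 1 := by positivity
            linarith
        calc σ b c = σ b c * 1 := (mul_one _).symm
          _ ≤ _ := mul_le_mul_of_nonneg_left h1 (hσnn b c)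
    linarith [hσtot]
  have hA : ∑ b : U × U, |w₁ b.1 b.2 / D - w₂ b.1 b.2 / D| ≤ 2 - 2 * T := by
    calc ∑ b : U × U, |w₁ b.1 b.2 / D - w₂ b.1 b.2 / D|
        ≤ ∑ b : U × U, (w₁ b.1 b.2 / D + w₂ b.1 b.2 / D - 2 * σ b b) := by
          refine Finset.sum_le_sum fun b _ => ?_
          rw [abs_sub_le_iff]
          constructor
          · linarith [hdiag2 b]
          · linarith [hdiag1 b]
      _ = 2 - 2 * T := by
          rw [hTdef]
          simp only [Finset.sum_sub_distrib, Finset.sum_add_distrib, ← Finset.mul_sum,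
            hμtot, hνtot]
          ring
  have hSrw : ∑ u, ∑ u', |w₁ u u' - w₂ u u'| = D * ∑ b : U × U, |w₁ b.1 b.2 / D - w₂ b.1 b.2 / D| := by
    rw [Fintype.sum_prod_type, Finset.mul_sum]
    refine Finset.sum_congr rfl fun u _ => ?_
    rw [Finset.mul_sum]
    refine Finset.sum_congr rfl fun u' _ => ?_
    rw [div_sub_div_same, abs_div, abs_of_pos hDpos, mul_div_cancel₀ _ hDpos.ne']
  rw [hSrw]
  have hM : ∑ b : U × U, |w₁ b.1 b.2 / D - w₂ b.1 b.2 / D| ≤ 4 * C := by linarith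
  have hfin : 1 / (4 * D) * (D * ∑ b : U × U, |w₁ b.1 b.2 / D - w₂ b.1 b.2 / D|)
      = (∑ b : U × U, |w₁ b.1 b.2 / D - w₂ b.1 b.2 / D|) / 4 := by
    field_simp
  rw [hfin]
  linarith
end

section
/- If the cost function c: U×U → ℝ₊ is a metric on U, then ρ(G₁,G₂) = 0 implies G₁ ∼ G₂ (the networks have identical random walks), and ρ satisfies symmetry and the triangle inequality; hence ρ is a metric on equivalence classes of connected undirected networks under ∼. -/
/-- The NetOTC cost `ρ(G₁,G₂)` for undirected networks with weight functions `w₁, w₂`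
on a common vertex set `U` and cost `c`: the minimal expected cost over stationary
transition couplings of the associated random walks (which have kernels
`wᵢ(u,u')/dᵢ(u)` and stationary distributions `dᵢ(u)/Dᵢ`). -/
noncomputable def netOTC {U : Type*} [Fintype U]
    (w₁ w₂ : U → U → ℝ) (c : U → U → ℝ) : ℝ :=
  sInf {x : ℝ | ∃ (lam : U × U → ℝ) (R : U × U → U × U → ℝ),
      IsTCStat (fun u u' => w₁ u u' / ∑ a, w₁ u a)
        (fun u u' => w₂ u u' / ∑ a, w₂ u a)
        (fun u => (∑ u', w₁ u u') / ∑ a, ∑ b, w₁ a b)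
        (fun u => (∑ u', w₂ u u') / ∑ a, ∑ b, w₂ a b) lam R ∧
      x = ∑ a : U × U, lam a * c a.1 a.2}

lemma aux_le_zero {a K : ℝ} (hK : 0 ≤ K) (h : ∀ ε : ℝ, 0 < ε → a ≤ ε * K) : a ≤ 0 := by
  by_contra ha
  push_neg at ha
  have := h (a / (2 * (K + 1))) (by positivity)
  rw [div_mul_eq_mul_div] at this
  rw [le_div_iff₀ (by positivity)] at this
  nlinarith

lemma IsTCStat.swap {U V : Type*} [Fintype U] [Fintype V]
    {P : U → U → ℝ} {Q : V → V → ℝ} {p : U → ℝ} {q : V → ℝ}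
    {lam : U × V → ℝ} {R : U × V → U × V → ℝ}
    (h : IsTCStat P Q p q lam R) :
    IsTCStat Q P q p (fun a => lam a.swap) (fun a b => R a.swap b.swap) := by
  obtain ⟨h1, h2, h3, h4, h5, h6, h7, h8⟩ := h
  refine ⟨fun a b => h1 _ _, fun a v' => h3 a.swap v', fun a u' => h2 a.swap u',
    fun a => h4 _, ?_, ?_, fun v => h8 v, fun u => h7 u⟩
  · rw [← h5]
    exact Fintype.sum_equiv (Equiv.prodComm V U) _ _ (fun a => rfl)
  · intro b
    show ∑ a : V × U, lam a.swap * R a.swap b.swap = lam b.swap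
    rw [← h6 b.swap]
    exact Fintype.sum_equiv (Equiv.prodComm V U) _ _ (fun a => rfl)

section walk
variable {U : Type*} [Fintype U] (w : U → U → ℝ)

lemma ker_nonneg (hnn : ∀ u u', 0 ≤ w u u') (u u' : U) : 0 ≤ w u u' / ∑ a, w u a :=
  div_nonneg (hnn u u') (Finset.sum_nonneg fun a _ => hnn u a)

lemma ker_row (hdeg : ∀ u, 0 < ∑ u', w u u') (u : U) :
    ∑ u', w u u' / ∑ a, w u a = 1 := by
  rw [← Finset.sum_div]
  exact div_self (hdeg u).ne'

lemma total_pos [Nonempty U] (hdeg : ∀ u, 0 < ∑ u', w u u') :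
    0 < ∑ a, ∑ b, w a b :=
  Finset.sum_pos (fun a _ => hdeg a) Finset.univ_nonempty

lemma statd_pos [Nonempty U] (hdeg : ∀ u, 0 < ∑ u', w u u') (u : U) :
    0 < (∑ u', w u u') / ∑ a, ∑ b, w a b :=
  div_pos (hdeg u) (total_pos w hdeg)

lemma statd_sum [Nonempty U] (hdeg : ∀ u, 0 < ∑ u', w u u') :
    ∑ u, (∑ u', w u u') / ∑ a, ∑ b, w a b = 1 := by
  rw [← Finset.sum_div]
  exact div_self (total_pos w hdeg).ne'

lemma statd_stat [Nonempty U] (hsym : ∀ u u', w u u' = w u' u)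
    (hdeg : ∀ u, 0 < ∑ u', w u u') (u' : U) :
    ∑ u, ((∑ x, w u x) / ∑ a, ∑ b, w a b) * (w u u' / ∑ x, w u x)
      = (∑ x, w u' x) / ∑ a, ∑ b, w a b := by
  have h1 : ∀ u : U, ((∑ x, w u x) / ∑ a, ∑ b, w a b) * (w u u' / ∑ x, w u x)
      = w u u' / ∑ a, ∑ b, w a b := by
    intro u
    rw [div_mul_div_comm]
    rw [mul_comm ((∑ x, w u x)) (w u u')]
    exact mul_div_mul_right _ _ (hdeg u).ne'
  rw [Finset.sum_congr rfl fun u _ => h1 u, ← Finset.sum_div]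
  congr 1
  exact Finset.sum_congr rfl fun u _ => hsym u u'

end walk

lemma indep_tc {U V : Type*} [Fintype U] [Fintype V]
    (P : U → U → ℝ) (Q : V → V → ℝ) (p : U → ℝ) (q : V → ℝ)
    (hPnn : ∀ u u', 0 ≤ P u u') (hQnn : ∀ v v', 0 ≤ Q v v')
    (hProw : ∀ u, ∑ u', P u u' = 1) (hQrow : ∀ v, ∑ v', Q v v' = 1)
    (hpnn : ∀ u, 0 ≤ p u) (hqnn : ∀ v, 0 ≤ q v)
    (hpsum : ∑ u, p u = 1) (hqsum : ∑ v, q v = 1)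
    (hpstat : ∀ u', ∑ u, p u * P u u' = p u')
    (hqstat : ∀ v', ∑ v, q v * Q v v' = q v') :
    IsTCStat P Q p q (fun a => p a.1 * q a.2) (fun a b => P a.1 b.1 * Q a.2 b.2) := by
  refine ⟨fun a b => mul_nonneg (hPnn _ _) (hQnn _ _), ?_, ?_,
    fun a => mul_nonneg (hpnn _) (hqnn _), ?_, ?_, ?_, ?_⟩
  · intro a u'
    show ∑ v' : V, P a.1 u' * Q a.2 v' = P a.1 u'
    rw [← Finset.mul_sum, hQrow, mul_one]
  · intro a v'
    show ∑ u' : U, P a.1 u' * Q a.2 v' = Q a.2 v'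
    rw [← Finset.sum_mul, hProw, one_mul]
  · rw [Fintype.sum_prod_type]
    simp only [← Finset.mul_sum, hqsum, mul_one]
    exact hpsum
  · intro b
    show ∑ a : U × V, p a.1 * q a.2 * (P a.1 b.1 * Q a.2 b.2) = p b.1 * q b.2
    rw [Fintype.sum_prod_type]
    have : ∀ u : U, ∑ v : V, p u * q v * (P u b.1 * Q v b.2)
        = (p u * P u b.1) * (q b.2) := by
      intro u
      rw [← hqstat b.2, Finset.mul_sum]
      exact Finset.sum_congr rfl fun v _ => by ring
    rw [Finset.sum_congr rfl fun u _ => this u, ← Finset.sum_mul, hpstat]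
  · intro u
    show ∑ v : V, p u * q v = p u
    rw [← Finset.mul_sum, hqsum, mul_one]
  · intro v
    show ∑ u : U, p u * q v = q v
    rw [← Finset.sum_mul, hpsum, one_mul]

lemma eq_of_small {U : Type*} [Fintype U]
    (P₁ P₂ : U → U → ℝ) (p₁ p₂ : U → ℝ) (c : U → U → ℝ)
    (hp₁pos : ∀ u, 0 < p₁ u)
    (hcnn : ∀ u v, 0 ≤ c u v)
    (hcpos : ∀ u v, u ≠ v → 0 < c u v)
    (h : ∀ ε : ℝ, 0 < ε → ∃ (lam : U × U → ℝ) (R : U × U → U × U → ℝ),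
        IsTCStat P₁ P₂ p₁ p₂ lam R ∧ ∑ a : U × U, lam a * c a.1 a.2 < ε) :
    (∀ u, p₁ u = p₂ u) ∧ ∀ u u', P₁ u u' = P₂ u u' := by
  classical
  -- generic extraction of facts from an ε-coupling
  have main : ∀ ε : ℝ, 0 < ε → ∃ (lam : U × U → ℝ) (R : U × U → U × U → ℝ),
      (∀ a, 0 ≤ lam a) ∧ (∀ a b, 0 ≤ R a b) ∧
      (∀ x y : U, x ≠ y → lam (x, y) ≤ ε * (c x y)⁻¹) ∧
      (∀ u, ∑ v, lam (u, v) = p₁ u) ∧ (∀ v, ∑ u, lam (u, v) = p₂ v) ∧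
      (∀ (a : U × U) (u' : U), ∑ v', R a (u', v') = P₁ a.1 u') ∧
      (∀ (a : U × U) (v' : U), ∑ u', R a (u', v') = P₂ a.2 v') ∧
      (∀ b : U × U, ∑ a : U × U, lam a * R a b = lam b) := by
    intro ε hε
    obtain ⟨lam, R, ⟨h1, h2, h3, h4, h5, h6, h7, h8⟩, hcost⟩ := h ε hε
    refine ⟨lam, R, h4, h1, ?_, h7, h8, h2, h3, h6⟩
    intro x y hxy
    have h1' : lam (x, y) * c x y ≤ ε := by
      refine le_trans ?_ hcost.le
      exact Finset.single_le_sum (f := fun a : U × U => lam a * c a.1 a.2)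
        (fun a _ => mul_nonneg (h4 a) (hcnn _ _)) (Finset.mem_univ (x, y))
    rw [← div_eq_mul_inv]
    exact (le_div_iff₀ (hcpos x y hxy)).2 h1'
  constructor
  · intro u
    set Ka : ℝ := ∑ v ∈ Finset.univ.erase u, (c u v)⁻¹ with hKa
    set Kb : ℝ := ∑ v ∈ Finset.univ.erase u, (c v u)⁻¹ with hKb
    have hKa0 : 0 ≤ Ka := Finset.sum_nonneg fun v _ => inv_nonneg.2 (hcnn _ _)
    have hKb0 : 0 ≤ Kb := Finset.sum_nonneg fun v _ => inv_nonneg.2 (hcnn _ _)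
    have key : ∀ ε : ℝ, 0 < ε →
        p₁ u - p₂ u ≤ ε * (Ka + Kb) ∧ p₂ u - p₁ u ≤ ε * (Ka + Kb) := by
      intro ε hε
      obtain ⟨lam, R, hlnn, hRnn, hbd, hm1, hm2, _, _, _⟩ := main ε hε
      have e1 : p₁ u = lam (u, u) + ∑ v ∈ Finset.univ.erase u, lam (u, v) := by
        rw [← hm1 u]
        exact (Finset.add_sum_erase _ (fun v => lam (u, v)) (Finset.mem_univ u)).symm
      have e2 : p₂ u = lam (u, u) + ∑ v ∈ Finset.univ.erase u, lam (v, u) := by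
        rw [← hm2 u]
        exact (Finset.add_sum_erase _ (fun v => lam (v, u)) (Finset.mem_univ u)).symm
      have b1 : ∑ v ∈ Finset.univ.erase u, lam (u, v) ≤ ε * Ka := by
        rw [hKa, Finset.mul_sum]
        refine Finset.sum_le_sum fun v hv => hbd u v ?_
        exact fun hc => ((Finset.mem_erase.mp hv).1 hc.symm)
      have b2 : ∑ v ∈ Finset.univ.erase u, lam (v, u) ≤ ε * Kb := by
        rw [hKb, Finset.mul_sum]
        refine Finset.sum_le_sum fun v hv => hbd v u ((Finset.mem_erase.mp hv).1)
      have n1 : 0 ≤ ∑ v ∈ Finset.univ.erase u, lam (u, v) :=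
        Finset.sum_nonneg fun v _ => hlnn _
      have n2 : 0 ≤ ∑ v ∈ Finset.univ.erase u, lam (v, u) :=
        Finset.sum_nonneg fun v _ => hlnn _
      constructor <;> nlinarith
    have h1 : p₁ u - p₂ u ≤ 0 :=
      aux_le_zero (by linarith) fun ε hε => (key ε hε).1
    have h2 : p₂ u - p₁ u ≤ 0 :=
      aux_le_zero (by linarith) fun ε hε => (key ε hε).2
    linarith
  · intro u u'
    set D : ℝ := P₁ u u' - P₂ u u' with hD
    set K1 : ℝ := ∑ v ∈ Finset.univ.erase u, (c u v)⁻¹ with hK1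
    set Kra : ℝ := ∑ y ∈ Finset.univ.erase u', (c u' y)⁻¹ with hKra
    set Krb : ℝ := ∑ x ∈ Finset.univ.erase u', (c x u')⁻¹ with hKrb
    have hK10 : 0 ≤ K1 := Finset.sum_nonneg fun v _ => inv_nonneg.2 (hcnn _ _)
    have hKra0 : 0 ≤ Kra := Finset.sum_nonneg fun v _ => inv_nonneg.2 (hcnn _ _)
    have hKrb0 : 0 ≤ Krb := Finset.sum_nonneg fun v _ => inv_nonneg.2 (hcnn _ _)
    have key : ∀ ε : ℝ, 0 < ε →
        p₁ u * |D| ≤ ε * ((Kra + Krb) + K1 * |D|) := by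
      intro ε hε
      obtain ⟨lam, R, hlnn, hRnn, hbd, hm1, hm2, hr1, hr2, hstat⟩ := main ε hε
      set l : ℝ := lam (u, u) with hl
      have hl0 : 0 ≤ l := hlnn _
      have hlow : p₁ u ≤ l + ε * K1 := by
        have e1 : p₁ u = l + ∑ v ∈ Finset.univ.erase u, lam (u, v) := by
          rw [← hm1 u]
          exact (Finset.add_sum_erase _ (fun v => lam (u, v)) (Finset.mem_univ u)).symm
        have b1 : ∑ v ∈ Finset.univ.erase u, lam (u, v) ≤ ε * K1 := by
          rw [hK1, Finset.mul_sum]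
          refine Finset.sum_le_sum fun v hv => hbd u v ?_
          exact fun hc => ((Finset.mem_erase.mp hv).1 hc.symm)
        linarith
      have hRterm : ∀ x y : U, x ≠ y → l * R (u, u) (x, y) ≤ ε * (c x y)⁻¹ := by
        intro x y hxy
        have h1 : l * R (u, u) (x, y) ≤ lam (x, y) := by
          rw [← hstat (x, y)]
          exact Finset.single_le_sum (f := fun a : U × U => lam a * R a (x, y))
            (fun a _ => mul_nonneg (hlnn a) (hRnn a _)) (Finset.mem_univ (u, u))
        exact h1.trans (hbd x y hxy)
      have hP1 : l * P₁ u u'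
          = l * R (u, u) (u', u') + ∑ y ∈ Finset.univ.erase u', l * R (u, u) (u', y) := by
        rw [← hr1 (u, u) u', Finset.mul_sum]
        exact (Finset.add_sum_erase _ (fun y => l * R (u, u) (u', y)) (Finset.mem_univ u')).symm
      have hP2 : l * P₂ u u'
          = l * R (u, u) (u', u') + ∑ x ∈ Finset.univ.erase u', l * R (u, u) (x, u') := by
        rw [← hr2 (u, u) u', Finset.mul_sum]
        exact (Finset.add_sum_erase _ (fun x => l * R (u, u) (x, u')) (Finset.mem_univ u')).symm
      have ba : ∑ y ∈ Finset.univ.erase u', l * R (u, u) (u', y) ≤ ε * Kra := by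
        rw [hKra, Finset.mul_sum]
        refine Finset.sum_le_sum fun y hy => hRterm u' y ?_
        exact fun hc => ((Finset.mem_erase.mp hy).1 hc.symm)
      have bb : ∑ x ∈ Finset.univ.erase u', l * R (u, u) (x, u') ≤ ε * Krb := by
        rw [hKrb, Finset.mul_sum]
        refine Finset.sum_le_sum fun x hx => hRterm x u' ((Finset.mem_erase.mp hx).1)
      have na : 0 ≤ ∑ y ∈ Finset.univ.erase u', l * R (u, u) (u', y) :=
        Finset.sum_nonneg fun y _ => mul_nonneg hl0 (hRnn _ _)
      have nb : 0 ≤ ∑ x ∈ Finset.univ.erase u', l * R (u, u) (x, u') :=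
        Finset.sum_nonneg fun x _ => mul_nonneg hl0 (hRnn _ _)
      have habs : |l * D| ≤ ε * (Kra + Krb) := by
        rw [abs_le]
        constructor <;> [nlinarith; nlinarith]
      have hld : l * |D| = |l * D| := by
        rw [abs_mul, abs_of_nonneg hl0]
      nlinarith [abs_nonneg D, mul_le_mul_of_nonneg_right hlow (abs_nonneg D)]
    have h0 : p₁ u * |D| ≤ 0 := by
      refine aux_le_zero ?_ key
      positivity
    have : |D| = 0 := by nlinarith [hp₁pos u, abs_nonneg D]
    have : D = 0 := abs_eq_zero.mp this
    linarith [this]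

lemma sum_swap4 {M : Type*} [AddCommMonoid M] {U : Type*} [Fintype U]
    (f : U → U → U → U → M) :
    ∑ u, ∑ w, ∑ v, ∑ v', f u w v v' = ∑ v', ∑ u, ∑ v, ∑ w, f u w v v' :=
  calc ∑ u, ∑ w, ∑ v, ∑ v', f u w v v'
      = ∑ u, ∑ v, ∑ w, ∑ v', f u w v v' :=
        Finset.sum_congr rfl fun u _ => Finset.sum_comm
    _ = ∑ u, ∑ v, ∑ v', ∑ w, f u w v v' :=
        Finset.sum_congr rfl fun u _ => Finset.sum_congr rfl fun v _ => Finset.sum_comm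
    _ = ∑ u, ∑ v', ∑ v, ∑ w, f u w v v' :=
        Finset.sum_congr rfl fun u _ => Finset.sum_comm
    _ = ∑ v', ∑ u, ∑ v, ∑ w, f u w v v' := Finset.sum_comm

lemma exists_Rt {U : Type*} [Fintype U]
    (P₁ P₂ P₃ : U → U → ℝ)
    (hP₂nn : ∀ v v', 0 ≤ P₂ v v')
    (R₁₂ : U × U → U × U → ℝ) (R₂₃ : U × U → U × U → ℝ)
    (R12nn : ∀ a b, 0 ≤ R₁₂ a b) (R23nn : ∀ a b, 0 ≤ R₂₃ a b)
    (R12b : ∀ (a : U × U) (v' : U), ∑ u', R₁₂ a (u', v') = P₂ a.2 v')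
    (R23a : ∀ (a : U × U) (v' : U), ∑ w', R₂₃ a (v', w') = P₂ a.1 v') :
    ∃ Rt : (U × U × U) → (U × U × U) → ℝ,
      (∀ a b, 0 ≤ Rt a b) ∧
      (∀ (a : U × U × U) (u' v' : U), ∑ w', Rt a (u', v', w') = R₁₂ (a.1, a.2.1) (u', v')) ∧
      (∀ (a : U × U × U) (v' w' : U), ∑ u', Rt a (u', v', w') = R₂₃ a.2 (v', w')) := by
  refine ⟨fun a b => R₁₂ (a.1, a.2.1) (b.1, b.2.1) * R₂₃ a.2 b.2 / P₂ a.2.1 b.2.1,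
    fun a b => div_nonneg (mul_nonneg (R12nn _ _) (R23nn _ _)) (hP₂nn _ _), ?_, ?_⟩
  · intro a u' v'
    show ∑ w', R₁₂ (a.1, a.2.1) (u', v') * R₂₃ a.2 (v', w') / P₂ a.2.1 v'
        = R₁₂ (a.1, a.2.1) (u', v')
    rw [← Finset.sum_div, ← Finset.mul_sum, R23a a.2 v', mul_div_assoc]
    by_cases hq : P₂ a.2.1 v' = 0
    · rw [hq, zero_div, mul_zero]
      have h0 := R12b (a.1, a.2.1) v'
      have : ∀ x ∈ Finset.univ, (0:ℝ) ≤ R₁₂ (a.1, a.2.1) (x, v') :=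
        fun x _ => R12nn _ _
      have hz : R₁₂ (a.1, a.2.1) (u', v') = 0 := by
        have := (Finset.sum_eq_zero_iff_of_nonneg this).mp (by rw [h0]; exact hq) u'
          (Finset.mem_univ u')
        exact this
      exact hz.symm
    · rw [div_self hq, mul_one]
  · intro a v' w'
    show ∑ u', R₁₂ (a.1, a.2.1) (u', v') * R₂₃ a.2 (v', w') / P₂ a.2.1 v'
        = R₂₃ a.2 (v', w')
    rw [← Finset.sum_div, ← Finset.sum_mul, R12b (a.1, a.2.1) v']
    by_cases hq : P₂ a.2.1 v' = 0
    · show P₂ a.2.1 v' * R₂₃ a.2 (v', w') / P₂ a.2.1 v' = _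
      rw [hq, zero_mul, zero_div]
      have h0 := R23a a.2 v'
      have : ∀ x ∈ Finset.univ, (0:ℝ) ≤ R₂₃ a.2 (v', x) := fun x _ => R23nn _ _
      exact ((Finset.sum_eq_zero_iff_of_nonneg this).mp (by rw [h0]; exact hq) w'
        (Finset.mem_univ w')).symm
    · exact mul_div_cancel_left₀ _ hq

open Filter in
lemma exists_mut {U : Type*} [Fintype U]
    (lam₁₂ lam₂₃ : U × U → ℝ) (p₂ : U → ℝ)
    (hp₂ : ∀ v, 0 < p₂ v)
    (l12nn : ∀ a, 0 ≤ lam₁₂ a) (l23nn : ∀ a, 0 ≤ lam₂₃ a)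
    (l12sum : ∑ a : U × U, lam₁₂ a = 1)
    (l12b : ∀ v, ∑ u, lam₁₂ (u, v) = p₂ v)
    (l23a : ∀ v, ∑ w, lam₂₃ (v, w) = p₂ v)
    (R₁₂ R₂₃ : U × U → U × U → ℝ)
    (l12stat : ∀ b : U × U, ∑ a : U × U, lam₁₂ a * R₁₂ a b = lam₁₂ b)
    (l23stat : ∀ b : U × U, ∑ a : U × U, lam₂₃ a * R₂₃ a b = lam₂₃ b)
    (Rt : (U × U × U) → (U × U × U) → ℝ)
    (hRtnn : ∀ a b, 0 ≤ Rt a b)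
    (hL1 : ∀ (a : U × U × U) (u' v' : U), ∑ w', Rt a (u', v', w') = R₁₂ (a.1, a.2.1) (u', v'))
    (hL2 : ∀ (a : U × U × U) (v' w' : U), ∑ u', Rt a (u', v', w') = R₂₃ a.2 (v', w')) :
    ∃ μt : (U × U × U) → ℝ,
      (∀ a, 0 ≤ μt a) ∧
      (∀ u v, ∑ w, μt (u, v, w) = lam₁₂ (u, v)) ∧
      (∀ v w, ∑ u, μt (u, v, w) = lam₂₃ (v, w)) ∧
      (∀ b, ∑ a, μt a * Rt a b = μt b) := by
  classical
  -- the iterated chain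
  let mu : ℕ → (U × U × U) → ℝ := fun n => Nat.rec
    (fun a => lam₁₂ (a.1, a.2.1) * lam₂₃ a.2 / p₂ a.2.1)
    (fun _ μ => fun b => ∑ a, μ a * Rt a b) n
  have hmu0 : ∀ a, mu 0 a = lam₁₂ (a.1, a.2.1) * lam₂₃ a.2 / p₂ a.2.1 := fun a => rfl
  have hmuS : ∀ n b, mu (n + 1) b = ∑ a, mu n a * Rt a b := fun n b => rfl
  have hinv : ∀ n, (∀ a, 0 ≤ mu n a) ∧
      (∀ u v, ∑ w, mu n (u, v, w) = lam₁₂ (u, v)) ∧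
      (∀ v w, ∑ u, mu n (u, v, w) = lam₂₃ (v, w)) := by
    intro n
    induction n with
    | zero =>
      refine ⟨fun a => div_nonneg (mul_nonneg (l12nn _) (l23nn _)) (hp₂ _).le, ?_, ?_⟩
      · intro u v
        show ∑ w, lam₁₂ (u, v) * lam₂₃ (v, w) / p₂ v = lam₁₂ (u, v)
        rw [← Finset.sum_div, ← Finset.mul_sum, l23a v]
        exact mul_div_cancel_right₀ _ (hp₂ v).ne'
      · intro v w
        show ∑ u, lam₁₂ (u, v) * lam₂₃ (v, w) / p₂ v = lam₂₃ (v, w)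
        rw [← Finset.sum_div, ← Finset.sum_mul, l12b v]
        exact mul_div_cancel_left₀ _ (hp₂ v).ne'
    | succ n ih =>
      obtain ⟨ihnn, ih12, ih23⟩ := ih
      refine ⟨fun b => Finset.sum_nonneg fun a _ => mul_nonneg (ihnn a) (hRtnn a b), ?_, ?_⟩
      · intro u' v'
        calc ∑ w', mu (n+1) (u', v', w') = ∑ w', ∑ a, mu n a * Rt a (u', v', w') := rfl
          _ = ∑ a, ∑ w', mu n a * Rt a (u', v', w') := Finset.sum_comm
          _ = ∑ a, mu n a * R₁₂ (a.1, a.2.1) (u', v') := by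
              refine Finset.sum_congr rfl fun a _ => ?_
              rw [← Finset.mul_sum, hL1]
          _ = ∑ u, ∑ v, ∑ w, mu n (u, v, w) * R₁₂ (u, v) (u', v') := by
              rw [Fintype.sum_prod_type]
              exact Finset.sum_congr rfl fun u _ => Fintype.sum_prod_type _
          _ = ∑ u, ∑ v, lam₁₂ (u, v) * R₁₂ (u, v) (u', v') := by
              refine Finset.sum_congr rfl fun u _ => Finset.sum_congr rfl fun v _ => ?_
              rw [← Finset.sum_mul, ih12]
          _ = ∑ a : U × U, lam₁₂ a * R₁₂ a (u', v') := by
              rw [Fintype.sum_prod_type]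
          _ = lam₁₂ (u', v') := l12stat (u', v')
      · intro v' w'
        calc ∑ u', mu (n+1) (u', v', w') = ∑ u', ∑ a, mu n a * Rt a (u', v', w') := rfl
          _ = ∑ a, ∑ u', mu n a * Rt a (u', v', w') := Finset.sum_comm
          _ = ∑ a, mu n a * R₂₃ a.2 (v', w') := by
              refine Finset.sum_congr rfl fun a _ => ?_
              rw [← Finset.mul_sum, hL2]
          _ = ∑ u, ∑ b : U × U, mu n (u, b) * R₂₃ b (v', w') := Fintype.sum_prod_type _
          _ = ∑ b : U × U, ∑ u, mu n (u, b) * R₂₃ b (v', w') := Finset.sum_comm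
          _ = ∑ b : U × U, lam₂₃ b * R₂₃ b (v', w') := by
              refine Finset.sum_congr rfl fun b _ => ?_
              rw [← Finset.sum_mul]
              have : ∑ u, mu n (u, b) = lam₂₃ b := by
                have := ih23 b.1 b.2
                simpa using this
              rw [this]
          _ = lam₂₃ (v', w') := l23stat (v', w')
  have hle1 : ∀ n a, mu n a ≤ 1 := by
    intro n a
    have h1 : mu n a ≤ ∑ w, mu n (a.1, a.2.1, w) := by
      have := Finset.single_le_sum (f := fun w => mu n (a.1, a.2.1, w))
        (fun w _ => (hinv n).1 _) (Finset.mem_univ a.2.2)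
      simpa using this
    have h2 : lam₁₂ (a.1, a.2.1) ≤ ∑ b : U × U, lam₁₂ b :=
      Finset.single_le_sum (fun b _ => l12nn b) (Finset.mem_univ (a.1, a.2.1))
    rw [(hinv n).2.1 a.1 a.2.1] at h1
    rw [l12sum] at h2
    linarith
  -- Cesàro averages
  let nu : ℕ → (U × U × U) → ℝ := fun N b => (∑ n ∈ Finset.range N, mu n b) / N
  have hnu_nn : ∀ N a, 0 ≤ nu N a := fun N a =>
    div_nonneg (Finset.sum_nonneg fun n _ => (hinv n).1 a) (Nat.cast_nonneg N)
  have hnu_le1 : ∀ k (a : U × U × U), nu (k+1) a ≤ 1 := by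
    intro k a
    show (∑ n ∈ Finset.range (k+1), mu n a) / ((k+1 : ℕ) : ℝ) ≤ 1
    rw [div_le_one (by positivity)]
    calc ∑ n ∈ Finset.range (k+1), mu n a ≤ ∑ n ∈ Finset.range (k+1), (1:ℝ) :=
          Finset.sum_le_sum fun n _ => hle1 n a
      _ = ((k+1 : ℕ) : ℝ) := by simp
  have hnu12 : ∀ k u v, ∑ w, nu (k+1) (u, v, w) = lam₁₂ (u, v) := by
    intro k u v
    show ∑ w, (∑ n ∈ Finset.range (k+1), mu n (u, v, w)) / ((k+1 : ℕ) : ℝ) = _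
    rw [← Finset.sum_div, Finset.sum_comm]
    rw [Finset.sum_congr rfl fun n _ => (hinv n).2.1 u v]
    rw [Finset.sum_const, Finset.card_range, nsmul_eq_mul]
    exact mul_div_cancel_left₀ _ (by positivity)
  have hnu23 : ∀ k v w, ∑ u, nu (k+1) (u, v, w) = lam₂₃ (v, w) := by
    intro k v w
    show ∑ u, (∑ n ∈ Finset.range (k+1), mu n (u, v, w)) / ((k+1 : ℕ) : ℝ) = _
    rw [← Finset.sum_div, Finset.sum_comm]
    rw [Finset.sum_congr rfl fun n _ => (hinv n).2.2 v w]
    rw [Finset.sum_const, Finset.card_range, nsmul_eq_mul]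
    exact mul_div_cancel_left₀ _ (by positivity)
  have hdrift : ∀ N b, ∑ a, nu N a * Rt a b = nu N b + (mu N b - mu 0 b) / N := by
    intro N b
    have tele : ∑ n ∈ Finset.range N, mu (n+1) b
        = ∑ n ∈ Finset.range N, mu n b + mu N b - mu 0 b := by
      have h1 := Finset.sum_range_succ' (fun n => mu n b) N
      have h2 := Finset.sum_range_succ (fun n => mu n b) N
      linarith
    calc ∑ a, nu N a * Rt a b
        = ∑ a, (∑ n ∈ Finset.range N, mu n a * Rt a b) / N := by
          refine Finset.sum_congr rfl fun a _ => ?_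
          show (∑ n ∈ Finset.range N, mu n a) / N * Rt a b = _
          rw [div_mul_eq_mul_div, Finset.sum_mul]
      _ = (∑ n ∈ Finset.range N, ∑ a, mu n a * Rt a b) / N := by
          rw [← Finset.sum_div, Finset.sum_comm]
      _ = (∑ n ∈ Finset.range N, mu (n+1) b) / N := by
          rw [Finset.sum_congr rfl fun n _ => (hmuS n b).symm]
      _ = nu N b + (mu N b - mu 0 b) / N := by
          rw [tele]
          show (∑ n ∈ Finset.range N, mu n b + mu N b - mu 0 b) / N
              = (∑ n ∈ Finset.range N, mu n b) / N + (mu N b - mu 0 b) / N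
          ring
  -- compactness
  let C : Set ((U × U × U) → ℝ) := Set.univ.pi fun _ => Set.Icc (0:ℝ) 1
  have hCcomp : IsCompact C := isCompact_univ_pi fun _ => isCompact_Icc
  have hmem : ∀ k : ℕ, (fun b => nu (k+1) b) ∈ C := by
    intro k
    rw [Set.mem_univ_pi]
    exact fun a => ⟨hnu_nn _ _, hnu_le1 _ _⟩
  obtain ⟨μt, hμtC, φ, hφ, hconv⟩ := hCcomp.tendsto_subseq hmem
  have hcoord : ∀ b, Tendsto (fun k => nu (φ k + 1) b) atTop (nhds (μt b)) :=
    fun b => tendsto_pi_nhds.mp hconv b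
  refine ⟨μt, ?_, ?_, ?_, ?_⟩
  · intro a
    exact ge_of_tendsto' (hcoord a) fun k => hnu_nn _ _
  · intro u v
    refine tendsto_nhds_unique
      (tendsto_finset_sum _ fun w _ => hcoord (u, v, w)) ?_
    exact tendsto_const_nhds.congr fun k => (hnu12 (φ k) u v).symm
  · intro v w
    refine tendsto_nhds_unique
      (tendsto_finset_sum _ fun u _ => hcoord (u, v, w)) ?_
    exact tendsto_const_nhds.congr fun k => (hnu23 (φ k) v w).symm
  · intro b
    have T1 : Tendsto (fun k => ∑ a, nu (φ k + 1) a * Rt a b) atTop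
        (nhds (∑ a, μt a * Rt a b)) :=
      tendsto_finset_sum _ fun a _ => (hcoord a).mul_const _
    have hz : Tendsto (fun k => (mu (φ k + 1) b - mu 0 b) / ((φ k + 1 : ℕ) : ℝ))
        atTop (nhds 0) := by
      refine squeeze_zero_norm (fun k => ?_) tendsto_one_div_add_atTop_nhds_zero_nat
      have hb1 : |mu (φ k + 1) b - mu 0 b| ≤ 1 := by
        have a1 := (hinv (φ k + 1)).1 b
        have a2 := hle1 (φ k + 1) b
        have a3 := (hinv 0).1 b
        have a4 := hle1 0 b
        rw [abs_le]; constructor <;> linarith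
      have hNpos : (0:ℝ) < ((φ k + 1 : ℕ) : ℝ) := by positivity
      rw [Real.norm_eq_abs, abs_div, abs_of_pos hNpos]
      have hk : k ≤ φ k := hφ.le_apply
      have hk1 : ((k:ℝ) + 1) ≤ ((φ k + 1 : ℕ) : ℝ) := by
        push_cast
        linarith [show (k:ℝ) ≤ (φ k : ℝ) from Nat.cast_le.mpr hk]
      calc |mu (φ k + 1) b - mu 0 b| / ((φ k + 1 : ℕ) : ℝ)
          ≤ 1 / ((φ k + 1 : ℕ) : ℝ) := by gcongr
        _ ≤ 1 / ((k:ℝ) + 1) := one_div_le_one_div_of_le (by positivity) hk1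
    have T2 : Tendsto (fun k => ∑ a, nu (φ k + 1) a * Rt a b) atTop (nhds (μt b)) := by
      have := (hcoord b).add hz
      rw [add_zero] at this
      exact this.congr fun k => (hdrift (φ k + 1) b).symm
    exact tendsto_nhds_unique T1 T2

lemma glue_tc {U : Type*} [Fintype U]
    (P₁ P₂ P₃ : U → U → ℝ) (p₁ p₂ p₃ : U → ℝ) (c : U → U → ℝ)
    (hp₂ : ∀ v, 0 < p₂ v)
    (hP₁nn : ∀ u u', 0 ≤ P₁ u u') (hP₂nn : ∀ v v', 0 ≤ P₂ v v')
    (hP₃nn : ∀ w w', 0 ≤ P₃ w w')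
    (hP₁row : ∀ u, ∑ u', P₁ u u' = 1)
    (hP₃row : ∀ w, ∑ w', P₃ w w' = 1)
    (hctri : ∀ u v w, c u w ≤ c u v + c v w)
    (lam₁₂ lam₂₃ : U × U → ℝ) (R₁₂ R₂₃ : U × U → U × U → ℝ)
    (h12 : IsTCStat P₁ P₂ p₁ p₂ lam₁₂ R₁₂)
    (h23 : IsTCStat P₂ P₃ p₂ p₃ lam₂₃ R₂₃) :
    ∃ (lam : U × U → ℝ) (R : U × U → U × U → ℝ), IsTCStat P₁ P₃ p₁ p₃ lam R ∧
      ∑ a : U × U, lam a * c a.1 a.2 ≤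
        ∑ a : U × U, lam₁₂ a * c a.1 a.2 + ∑ a : U × U, lam₂₃ a * c a.1 a.2 := by
  classical
  obtain ⟨R12nn, R12a, R12b, l12nn, l12sum, l12stat, l12a, l12b⟩ := h12
  obtain ⟨R23nn, R23a, R23b, l23nn, l23sum, l23stat, l23a, l23b⟩ := h23
  obtain ⟨Rt, hRtnn, hL1, hL2⟩ := exists_Rt P₁ P₂ P₃ hP₂nn R₁₂ R₂₃ R12nn R23nn R12b R23a
  obtain ⟨μt, hμnn, hμ12, hμ23, hμstat⟩ := exists_mut lam₁₂ lam₂₃ p₂ hp₂ l12nn l23nn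
    l12sum l12b l23a R₁₂ R₂₃ l12stat l23stat Rt hRtnn hL1 hL2
  -- derived facts about Rt
  have hrow1 : ∀ (a : U × U × U) (u' : U), ∑ v', ∑ w', Rt a (u', v', w') = P₁ a.1 u' := by
    intro a u'
    rw [Finset.sum_congr rfl fun v' _ => hL1 a u' v']
    exact R12a (a.1, a.2.1) u'
  have hrow3 : ∀ (a : U × U × U) (w' : U), ∑ v', ∑ u', Rt a (u', v', w') = P₃ a.2.2 w' := by
    intro a w'
    rw [Finset.sum_congr rfl fun v' _ => hL2 a v' w']
    exact R23b a.2 w'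
  -- the coupling of p₁ and p₃
  set lam13 : U × U → ℝ := fun a => ∑ v, μt (a.1, v, a.2) with hlam13
  set g : U × U → U × U → ℝ := fun aw b =>
    ∑ v, ∑ v', μt (aw.1, v, aw.2) * Rt (aw.1, v, aw.2) (b.1, v', b.2) with hg
  set R13 : U × U → U × U → ℝ := fun aw b =>
    if lam13 aw = 0 then P₁ aw.1 b.1 * P₃ aw.2 b.2 else g aw b / lam13 aw with hR13
  have hl13nn : ∀ a, 0 ≤ lam13 a := fun a => Finset.sum_nonneg fun v _ => hμnn _
  have hgnn : ∀ a b, 0 ≤ g a b := fun a b =>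
    Finset.sum_nonneg fun v _ => Finset.sum_nonneg fun v' _ =>
      mul_nonneg (hμnn _) (hRtnn _ _)
  have hzero : ∀ aw : U × U, lam13 aw = 0 → ∀ v, μt (aw.1, v, aw.2) = 0 := by
    intro aw h v
    exact (Finset.sum_eq_zero_iff_of_nonneg fun x _ => hμnn _).mp h v (Finset.mem_univ v)
  have hgrow1 : ∀ (aw : U × U) (u' : U), ∑ w', g aw (u', w') = lam13 aw * P₁ aw.1 u' := by
    intro aw u'
    calc ∑ w', g aw (u', w')
        = ∑ w', ∑ v, ∑ v', μt (aw.1, v, aw.2) * Rt (aw.1, v, aw.2) (u', v', w') := rfl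
      _ = ∑ v, ∑ w', ∑ v', μt (aw.1, v, aw.2) * Rt (aw.1, v, aw.2) (u', v', w') :=
          Finset.sum_comm
      _ = ∑ v, ∑ v', ∑ w', μt (aw.1, v, aw.2) * Rt (aw.1, v, aw.2) (u', v', w') :=
          Finset.sum_congr rfl fun v _ => Finset.sum_comm
      _ = ∑ v, μt (aw.1, v, aw.2) * P₁ aw.1 u' := by
          refine Finset.sum_congr rfl fun v _ => ?_
          rw [← hrow1 (aw.1, v, aw.2) u', Finset.mul_sum]
          exact Finset.sum_congr rfl fun v' _ => (Finset.mul_sum _ _ _).symm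
      _ = lam13 aw * P₁ aw.1 u' := by rw [← Finset.sum_mul]
  have hgrow3 : ∀ (aw : U × U) (w' : U), ∑ u', g aw (u', w') = lam13 aw * P₃ aw.2 w' := by
    intro aw w'
    calc ∑ u', g aw (u', w')
        = ∑ u', ∑ v, ∑ v', μt (aw.1, v, aw.2) * Rt (aw.1, v, aw.2) (u', v', w') := rfl
      _ = ∑ v, ∑ u', ∑ v', μt (aw.1, v, aw.2) * Rt (aw.1, v, aw.2) (u', v', w') :=
          Finset.sum_comm
      _ = ∑ v, ∑ v', ∑ u', μt (aw.1, v, aw.2) * Rt (aw.1, v, aw.2) (u', v', w') :=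
          Finset.sum_congr rfl fun v _ => Finset.sum_comm
      _ = ∑ v, μt (aw.1, v, aw.2) * P₃ aw.2 w' := by
          refine Finset.sum_congr rfl fun v _ => ?_
          rw [← hrow3 (aw.1, v, aw.2) w']
          rw [Finset.mul_sum]
          exact Finset.sum_congr rfl fun v' _ => (Finset.mul_sum _ _ _).symm
      _ = lam13 aw * P₃ aw.2 w' := by rw [← Finset.sum_mul]
  refine ⟨lam13, R13, ⟨?_, ?_, ?_, hl13nn, ?_, ?_, ?_, ?_⟩, ?_⟩
  -- R13 nonneg
  · intro a b
    show (if lam13 a = 0 then P₁ a.1 b.1 * P₃ a.2 b.2 else g a b / lam13 a) ≥ 0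
    split
    · exact mul_nonneg (hP₁nn _ _) (hP₃nn _ _)
    · exact div_nonneg (hgnn _ _) (hl13nn _)
  -- first row marginal
  · intro a u'
    show ∑ w', (if lam13 a = 0 then P₁ a.1 u' * P₃ a.2 w' else g a (u', w') / lam13 a)
        = P₁ a.1 u'
    by_cases h : lam13 a = 0
    · simp only [h, if_true, eq_self_iff_true]
      rw [← Finset.mul_sum, hP₃row, mul_one]
    · simp only [h, if_false]
      rw [← Finset.sum_div, hgrow1, mul_div_cancel_left₀ _ h]
  -- second row marginal
  · intro a w'
    show ∑ u', (if lam13 a = 0 then P₁ a.1 u' * P₃ a.2 w' else g a (u', w') / lam13 a)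
        = P₃ a.2 w'
    by_cases h : lam13 a = 0
    · simp only [h, if_true, eq_self_iff_true]
      rw [← Finset.sum_mul, hP₁row, one_mul]
    · simp only [h, if_false]
      rw [← Finset.sum_div, hgrow3, mul_div_cancel_left₀ _ h]
  -- total mass
  · calc ∑ a : U × U, lam13 a = ∑ u, ∑ w, ∑ v, μt (u, v, w) := by
          rw [Fintype.sum_prod_type]
      _ = ∑ u, ∑ v, ∑ w, μt (u, v, w) := Finset.sum_congr rfl fun u _ => Finset.sum_comm
      _ = ∑ u, ∑ v, lam₁₂ (u, v) := Finset.sum_congr rfl fun u _ =>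
          Finset.sum_congr rfl fun v _ => hμ12 u v
      _ = ∑ a : U × U, lam₁₂ a := (Fintype.sum_prod_type _).symm
      _ = 1 := l12sum
  -- stationarity
  · intro b
    have key : ∀ aw : U × U, lam13 aw * R13 aw b = g aw b := by
      intro aw
      show lam13 aw * (if lam13 aw = 0 then P₁ aw.1 b.1 * P₃ aw.2 b.2 else g aw b / lam13 aw)
          = g aw b
      by_cases h : lam13 aw = 0
      · simp only [h, if_true, zero_mul, eq_self_iff_true]
        refine (Finset.sum_eq_zero fun v _ => Finset.sum_eq_zero fun v' _ => ?_).symm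
        rw [hzero aw h v, zero_mul]
      · simp only [h, if_false]
        exact mul_div_cancel₀ _ h
    rw [Finset.sum_congr rfl fun aw _ => key aw]
    calc ∑ aw : U × U, g aw b
        = ∑ u, ∑ w, ∑ v, ∑ v', μt (u, v, w) * Rt (u, v, w) (b.1, v', b.2) := by
          rw [Fintype.sum_prod_type]
      _ = ∑ v', ∑ u, ∑ v, ∑ w, μt (u, v, w) * Rt (u, v, w) (b.1, v', b.2) :=
          sum_swap4 _
      _ = ∑ v', ∑ a : U × U × U, μt a * Rt a (b.1, v', b.2) := by
          refine Finset.sum_congr rfl fun v' _ => ?_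
          rw [Fintype.sum_prod_type]
          exact Finset.sum_congr rfl fun u _ =>
            (Fintype.sum_prod_type (fun y : U × U => μt (u, y) * Rt (u, y) (b.1, v', b.2))).symm
      _ = ∑ v', μt (b.1, v', b.2) := Finset.sum_congr rfl fun v' _ => hμstat _
      _ = lam13 b := rfl
  -- first marginal
  · intro u
    calc ∑ w, lam13 (u, w) = ∑ w, ∑ v, μt (u, v, w) := rfl
      _ = ∑ v, ∑ w, μt (u, v, w) := Finset.sum_comm
      _ = ∑ v, lam₁₂ (u, v) := Finset.sum_congr rfl fun v _ => hμ12 u v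
      _ = p₁ u := l12a u
  -- second marginal
  · intro w
    calc ∑ u, lam13 (u, w) = ∑ u, ∑ v, μt (u, v, w) := rfl
      _ = ∑ v, ∑ u, μt (u, v, w) := Finset.sum_comm
      _ = ∑ v, lam₂₃ (v, w) := Finset.sum_congr rfl fun v _ => hμ23 v w
      _ = p₃ w := l23b w
  -- cost
  · calc ∑ a : U × U, lam13 a * c a.1 a.2
        = ∑ u, ∑ w, (∑ v, μt (u, v, w)) * c u w := by
          rw [Fintype.sum_prod_type]
      _ = ∑ u, ∑ v, ∑ w, μt (u, v, w) * c u w := by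
          refine Finset.sum_congr rfl fun u _ => ?_
          rw [Finset.sum_comm]
          exact Finset.sum_congr rfl fun w _ => Finset.sum_mul _ _ _
      _ ≤ ∑ u, ∑ v, ∑ w, μt (u, v, w) * (c u v + c v w) := by
          refine Finset.sum_le_sum fun u _ => Finset.sum_le_sum fun v _ =>
            Finset.sum_le_sum fun w _ => ?_
          exact mul_le_mul_of_nonneg_left (hctri u v w) (hμnn _)
      _ = (∑ u, ∑ v, ∑ w, μt (u, v, w) * c u v)
          + ∑ u, ∑ v, ∑ w, μt (u, v, w) * c v w := by
          rw [← Finset.sum_add_distrib]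
          refine Finset.sum_congr rfl fun u _ => ?_
          rw [← Finset.sum_add_distrib]
          refine Finset.sum_congr rfl fun v _ => ?_
          rw [← Finset.sum_add_distrib]
          exact Finset.sum_congr rfl fun w _ => mul_add _ _ _
      _ = (∑ a : U × U, lam₁₂ a * c a.1 a.2) + ∑ a : U × U, lam₂₃ a * c a.1 a.2 := by
          congr 1
          · rw [Fintype.sum_prod_type]
            refine Finset.sum_congr rfl fun u _ => Finset.sum_congr rfl fun v _ => ?_
            rw [← hμ12 u v, Finset.sum_mul]
          · rw [Fintype.sum_prod_type]
            calc ∑ u, ∑ v, ∑ w, μt (u, v, w) * c v w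
                = ∑ v, ∑ u, ∑ w, μt (u, v, w) * c v w := Finset.sum_comm
              _ = ∑ v, ∑ w, ∑ u, μt (u, v, w) * c v w :=
                  Finset.sum_congr rfl fun v _ => Finset.sum_comm
              _ = ∑ v, ∑ w, lam₂₃ (v, w) * c v w := by
                  refine Finset.sum_congr rfl fun v _ => Finset.sum_congr rfl fun w _ => ?_
                  rw [← hμ23 v w, Finset.sum_mul]

def TCset {U : Type*} [Fintype U] (w₁ w₂ : U → U → ℝ) (c : U → U → ℝ) : Set ℝ :=
  {x : ℝ | ∃ (lam : U × U → ℝ) (R : U × U → U × U → ℝ),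
      IsTCStat (fun u u' => w₁ u u' / ∑ a, w₁ u a)
        (fun u u' => w₂ u u' / ∑ a, w₂ u a)
        (fun u => (∑ u', w₁ u u') / ∑ a, ∑ b, w₁ a b)
        (fun u => (∑ u', w₂ u u') / ∑ a, ∑ b, w₂ a b) lam R ∧
      x = ∑ a : U × U, lam a * c a.1 a.2}

lemma netOTC_eq_sInf {U : Type*} [Fintype U] (w₁ w₂ : U → U → ℝ) (c : U → U → ℝ) :
    netOTC w₁ w₂ c = sInf (TCset w₁ w₂ c) := rfl

lemma TCset_nonempty {U : Type*} [Fintype U] [Nonempty U]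
    (wa wb : U → U → ℝ) (c : U → U → ℝ)
    (hann : ∀ u u', 0 ≤ wa u u') (hasym : ∀ u u', wa u u' = wa u' u)
    (hadeg : ∀ u, 0 < ∑ u', wa u u')
    (hbnn : ∀ u u', 0 ≤ wb u u') (hbsym : ∀ u u', wb u u' = wb u' u)
    (hbdeg : ∀ u, 0 < ∑ u', wb u u') :
    (TCset wa wb c).Nonempty := by
  have h := indep_tc (fun u u' => wa u u' / ∑ a, wa u a)
    (fun u u' => wb u u' / ∑ a, wb u a)
    (fun u => (∑ u', wa u u') / ∑ a, ∑ b, wa a b)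
    (fun u => (∑ u', wb u u') / ∑ a, ∑ b, wb a b)
    (ker_nonneg wa hann) (ker_nonneg wb hbnn)
    (ker_row wa hadeg) (ker_row wb hbdeg)
    (fun u => (statd_pos wa hadeg u).le) (fun u => (statd_pos wb hbdeg u).le)
    (statd_sum wa hadeg) (statd_sum wb hbdeg)
    (statd_stat wa hasym hadeg) (statd_stat wb hbsym hbdeg)
  exact ⟨_, _, _, h, rfl⟩

lemma TCset_bddBelow {U : Type*} [Fintype U] (wa wb : U → U → ℝ) (c : U → U → ℝ)
    (hcnn : ∀ u v, 0 ≤ c u v) : BddBelow (TCset wa wb c) := by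
  refine ⟨0, fun x hx => ?_⟩
  obtain ⟨lam, R, ⟨_, _, _, h4, _⟩, hxe⟩ := hx
  exact hxe ▸ Finset.sum_nonneg fun a _ => mul_nonneg (h4 a) (hcnn _ _)

lemma TCset_symm {U : Type*} [Fintype U] (wa wb : U → U → ℝ) (c : U → U → ℝ)
    (hcsym : ∀ u v, c u v = c v u) : TCset wa wb c = TCset wb wa c := by
  have key : ∀ (w w' : U → U → ℝ), TCset w w' c ⊆ TCset w' w c := by
    rintro w w' x ⟨lam, R, hTC, hxe⟩
    refine ⟨fun a => lam a.swap, fun a b => R a.swap b.swap, hTC.swap, ?_⟩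
    rw [hxe]
    exact (Fintype.sum_equiv (Equiv.prodComm U U)
      (fun a => lam a.swap * c a.1 a.2) (fun b => lam b * c b.1 b.2)
      (fun a => by show lam a.swap * c a.1 a.2 = lam a.swap * c a.2 a.1
                   rw [hcsym a.1 a.2])).symm
  exact le_antisymm (key wa wb) (key wb wa)


/-- If the cost `c` is a metric on `U`, then for connected undirected
networks on `U`: `ρ(G₁,G₂) = 0` implies `G₁ ∼ G₂` (same edges, weights equal up to a
positive constant, i.e. identical random walks), `ρ` is symmetric, and `ρ` satisfies the
triangle inequality; hence `ρ` is a metric on equivalence classes of connected undirected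
networks under `∼`. -/
theorem netOTC_is_metric
    {U : Type*} [Fintype U]
    (c : U → U → ℝ)
    (hc0 : ∀ u, c u u = 0)
    (hceq : ∀ u v, c u v = 0 → u = v)
    (hcsym : ∀ u v, c u v = c v u)
    (hctri : ∀ u v w, c u w ≤ c u v + c v w)
    (w₁ w₂ w₃ : U → U → ℝ)
    (h1nn : ∀ u u', 0 ≤ w₁ u u') (h2nn : ∀ u u', 0 ≤ w₂ u u')
    (h3nn : ∀ u u', 0 ≤ w₃ u u')
    (h1sym : ∀ u u', w₁ u u' = w₁ u' u) (h2sym : ∀ u u', w₂ u u' = w₂ u' u)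
    (h3sym : ∀ u u', w₃ u u' = w₃ u' u)
    (h1conn : ∀ u u' : U, Relation.ReflTransGen (fun a b => 0 < w₁ a b) u u')
    (h2conn : ∀ u u' : U, Relation.ReflTransGen (fun a b => 0 < w₂ a b) u u')
    (h3conn : ∀ u u' : U, Relation.ReflTransGen (fun a b => 0 < w₃ a b) u u')
    (h1deg : ∀ u, 0 < ∑ u', w₁ u u') (h2deg : ∀ u, 0 < ∑ u', w₂ u u')
    (h3deg : ∀ u, 0 < ∑ u', w₃ u u') :
    (netOTC w₁ w₂ c = 0 →
        ((∀ u u', 0 < w₁ u u' ↔ 0 < w₂ u u')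
          ∧ ∃ C > (0 : ℝ), ∀ u u', w₁ u u' = C * w₂ u u'))
    ∧ netOTC w₁ w₂ c = netOTC w₂ w₁ c
    ∧ netOTC w₁ w₃ c ≤ netOTC w₁ w₂ c + netOTC w₂ w₃ c := by
  classical
  have hcnn : ∀ u v, 0 ≤ c u v := fun u v => by
    have := hctri u v u
    have h1 := hc0 u
    have h2 := hcsym u v
    nlinarith
  rcases isEmpty_or_nonempty U with hU | hU
  · have hempty : ∀ wa wb : U → U → ℝ, netOTC wa wb c = 0 := by
      intro wa wb
      rw [netOTC_eq_sInf]
      have : TCset wa wb c = ∅ := by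
        ext x
        simp only [Set.mem_empty_iff_false, iff_false]
        rintro ⟨lam, R, ⟨_, _, _, _, h5, _⟩, _⟩
        rw [Finset.univ_eq_empty, Finset.sum_empty] at h5
        exact one_ne_zero h5.symm
      rw [this, Real.sInf_empty]
    refine ⟨fun _ => ⟨fun u => isEmptyElim u, 1, one_pos, fun u => isEmptyElim u⟩, ?_, ?_⟩
    · rw [hempty, hempty]
    · rw [hempty, hempty, hempty]; norm_num
  · have hcpos : ∀ u v, u ≠ v → 0 < c u v := fun u v huv =>
      lt_of_le_of_ne (hcnn u v) fun h => huv (hceq u v h.symm)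
    have ne12 := TCset_nonempty w₁ w₂ c h1nn h1sym h1deg h2nn h2sym h2deg
    have ne23 := TCset_nonempty w₂ w₃ c h2nn h2sym h2deg h3nn h3sym h3deg
    refine ⟨?_, ?_, ?_⟩
    · -- identification
      intro h0
      have hsmall : ∀ ε : ℝ, 0 < ε → ∃ (lam : U × U → ℝ) (R : U × U → U × U → ℝ),
          IsTCStat (fun u u' => w₁ u u' / ∑ a, w₁ u a)
            (fun u u' => w₂ u u' / ∑ a, w₂ u a)
            (fun u => (∑ u', w₁ u u') / ∑ a, ∑ b, w₁ a b)
            (fun u => (∑ u', w₂ u u') / ∑ a, ∑ b, w₂ a b) lam R ∧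
          ∑ a : U × U, lam a * c a.1 a.2 < ε := by
        intro ε hε
        have hlt : sInf (TCset w₁ w₂ c) < ε := by
          rw [← netOTC_eq_sInf, h0]; exact hε
        obtain ⟨x, hx, hxlt⟩ := exists_lt_of_csInf_lt ne12 hlt
        obtain ⟨lam, R, hTC, hxe⟩ := hx
        exact ⟨lam, R, hTC, hxe ▸ hxlt⟩
      obtain ⟨hpeq, hPeq⟩ := eq_of_small
        (fun u u' => w₁ u u' / ∑ a, w₁ u a)
        (fun u u' => w₂ u u' / ∑ a, w₂ u a)
        (fun u => (∑ u', w₁ u u') / ∑ a, ∑ b, w₁ a b)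
        (fun u => (∑ u', w₂ u u') / ∑ a, ∑ b, w₂ a b)
        c (statd_pos w₁ h1deg) hcnn hcpos hsmall
      have hD1 : 0 < ∑ a, ∑ b, w₁ a b := total_pos w₁ h1deg
      have hD2 : 0 < ∑ a, ∑ b, w₂ a b := total_pos w₂ h2deg
      have hC : 0 < (∑ a, ∑ b, w₁ a b) / ∑ a, ∑ b, w₂ a b := div_pos hD1 hD2
      have claim : ∀ u u', w₁ u u' = ((∑ a, ∑ b, w₁ a b) / ∑ a, ∑ b, w₂ a b) * w₂ u u' := by
        intro u u'
        have h1 : w₁ u u' * (∑ a, w₂ u a) = w₂ u u' * (∑ a, w₁ u a) :=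
          (div_eq_div_iff (h1deg u).ne' (h2deg u).ne').mp (hPeq u u')
        have h2 : (∑ x, w₁ u x) * (∑ a, ∑ b, w₂ a b)
            = (∑ x, w₂ u x) * (∑ a, ∑ b, w₁ a b) :=
          (div_eq_div_iff hD1.ne' hD2.ne').mp (hpeq u)
        rw [div_mul_eq_mul_div, eq_div_iff hD2.ne']
        have h3 : w₁ u u' * (∑ a, ∑ b, w₂ a b) * (∑ a, w₂ u a)
            = (∑ a, ∑ b, w₁ a b) * w₂ u u' * (∑ a, w₂ u a) := by
          calc w₁ u u' * (∑ a, ∑ b, w₂ a b) * (∑ a, w₂ u a)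
              = w₁ u u' * (∑ a, w₂ u a) * (∑ a, ∑ b, w₂ a b) := by ring
            _ = w₂ u u' * (∑ a, w₁ u a) * (∑ a, ∑ b, w₂ a b) := by rw [h1]
            _ = w₂ u u' * ((∑ x, w₁ u x) * (∑ a, ∑ b, w₂ a b)) := by ring
            _ = w₂ u u' * ((∑ x, w₂ u x) * (∑ a, ∑ b, w₁ a b)) := by rw [h2]
            _ = (∑ a, ∑ b, w₁ a b) * w₂ u u' * (∑ a, w₂ u a) := by ring
        exact mul_right_cancel₀ (h2deg u).ne' h3
      refine ⟨fun u u' => ?_, _, hC, claim⟩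
      rw [claim u u']
      constructor
      · intro h; nlinarith
      · intro h; nlinarith
    · -- symmetry
      rw [netOTC_eq_sInf, netOTC_eq_sInf, TCset_symm w₁ w₂ c hcsym]
    · -- triangle inequality
      have key : ∀ x ∈ TCset w₁ w₂ c, ∀ y ∈ TCset w₂ w₃ c, netOTC w₁ w₃ c ≤ x + y := by
        rintro x ⟨lam12, R12, h12, hx⟩ y ⟨lam23, R23, h23, hy⟩
        obtain ⟨lam, R, hTC, hcost⟩ := glue_tc
          (fun u u' => w₁ u u' / ∑ a, w₁ u a)
          (fun u u' => w₂ u u' / ∑ a, w₂ u a)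
          (fun u u' => w₃ u u' / ∑ a, w₃ u a)
          (fun u => (∑ u', w₁ u u') / ∑ a, ∑ b, w₁ a b)
          (fun u => (∑ u', w₂ u u') / ∑ a, ∑ b, w₂ a b)
          (fun u => (∑ u', w₃ u u') / ∑ a, ∑ b, w₃ a b)
          c (statd_pos w₂ h2deg)
          (ker_nonneg w₁ h1nn) (ker_nonneg w₂ h2nn) (ker_nonneg w₃ h3nn)
          (ker_row w₁ h1deg) (ker_row w₃ h3deg) hctri lam12 lam23 R12 R23 h12 h23
        have hmem : (∑ a : U × U, lam a * c a.1 a.2) ∈ TCset w₁ w₃ c := ⟨lam, R, hTC, rfl⟩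
        calc netOTC w₁ w₃ c ≤ ∑ a : U × U, lam a * c a.1 a.2 := by
              rw [netOTC_eq_sInf]
              exact csInf_le (TCset_bddBelow w₁ w₃ c hcnn) hmem
          _ ≤ x + y := by rw [hx, hy]; exact hcost
      have step1 : ∀ y ∈ TCset w₂ w₃ c, netOTC w₁ w₃ c - y ≤ netOTC w₁ w₂ c := by
        intro y hy
        rw [netOTC_eq_sInf w₁ w₂]
        exact le_csInf ne12 fun x hx => by linarith [key x hx y hy]
      have step2 : netOTC w₁ w₃ c - netOTC w₁ w₂ c ≤ netOTC w₂ w₃ c := by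
        rw [netOTC_eq_sInf w₂ w₃]
        exact le_csInf ne23 fun y hy => by linarith [step1 y hy]
      linarith
end

section
/- If (X̃,Ỹ) is a deterministic transition coupling from X to Y (for each u ∈ U there is a unique v with P(Ỹ₀=v | X̃₀=u) = 1), then the induced map f: U → V satisfies the factor map condition: for all v,v' ∈ V and u ∈ f⁻¹(v), ∑_{u'∈f⁻¹(v')} P(u'|u) = Q(v'|v). -/
/-- If `(X̃,Ỹ)` is a deterministic transition coupling from `X` to `Y`
(its stationary distribution `lam` is supported on the graph of a map `f : U → V`, and
every pair `(u, f(u))` has positive probability), then the induced map `f` satisfies the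
factor map condition: for all `v' ∈ V` and `u ∈ U` (with `v = f(u)`),
`∑_{u' ∈ f⁻¹(v')} P(u'|u) = Q(v'|f(u))`. -/
theorem deterministic_transition_coupling_gives_factor
    {U V : Type*} [Fintype U] [Fintype V] [DecidableEq V]
    (P : U → U → ℝ) (Q : V → V → ℝ) (f : U → V)
    (R : U × V → U × V → ℝ) (lam : U × V → ℝ)
    (hPnn : ∀ u u', 0 ≤ P u u') (hProw : ∀ u, ∑ u', P u u' = 1)
    (hQnn : ∀ v v', 0 ≤ Q v v') (hQrow : ∀ v, ∑ v', Q v v' = 1)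
    (hRnn : ∀ a b, 0 ≤ R a b)
    (hTC1 : ∀ (a : U × V) (u' : U), ∑ v' : V, R a (u', v') = P a.1 u')
    (hTC2 : ∀ (a : U × V) (v' : V), ∑ u' : U, R a (u', v') = Q a.2 v')
    (hlamnn : ∀ a, 0 ≤ lam a) (hlamsum : ∑ a : U × V, lam a = 1)
    (hlamstat : ∀ b : U × V, ∑ a : U × V, lam a * R a b = lam b)
    (hdet : ∀ u v, 0 < lam (u, v) → v = f u)
    (hpos : ∀ u, 0 < lam (u, f u)) :
    ∀ (u : U) (v' : V),
      ∑ u' ∈ Finset.univ.filter (fun u' => f u' = v'), P u u' = Q (f u) v' := by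
  intro u v'
  have hR0 : ∀ u' w, w ≠ f u' → R (u, f u) (u', w) = 0 := by
    intro u' w hw
    have hlam0 : lam (u', w) = 0 := by
      rcases (hlamnn (u', w)).eq_or_lt with h | h
      · exact h.symm
      · exact absurd (hdet u' w h) hw
    have hsum := hlamstat (u', w)
    rw [hlam0] at hsum
    have hterm : lam (u, f u) * R (u, f u) (u', w) = 0 :=
      (Finset.sum_eq_zero_iff_of_nonneg
        (fun a _ => mul_nonneg (hlamnn a) (hRnn a _))).mp hsum (u, f u) (Finset.mem_univ _)
    exact (mul_eq_zero.mp hterm).resolve_left (ne_of_gt (hpos u))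
  have hP : ∀ u', P u u' = R (u, f u) (u', f u') := by
    intro u'
    rw [← hTC1 (u, f u) u', Finset.sum_eq_single (f u')]
    · intro w _ hw; exact hR0 u' w hw
    · intro h; exact absurd (Finset.mem_univ _) h
  have hQ : Q (f u) v' = ∑ u' ∈ Finset.univ.filter (fun u' => f u' = v'), R (u, f u) (u', v') := by
    rw [← hTC2 (u, f u) v']
    symm
    apply Finset.sum_subset (Finset.filter_subset _ _)
    intro u' _ hu'
    simp only [Finset.mem_filter, Finset.mem_univ, true_and] at hu'
    exact hR0 u' v' (fun h => hu' h.symm)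
  rw [hQ]
  apply Finset.sum_congr rfl
  intro u' hu'
  simp only [Finset.mem_filter] at hu'
  rw [hP u', hu'.2]
end

section
/- Let f be a factor map from G₁ to G₂, and suppose the cost c: U×V → ℝ₊ is compatible with f, i.e., c(u, f(u)) ≤ c(u,v) for all u ∈ U, v ∈ V. Then the deterministic coupling (X, f(X)) is an optimal transition coupling: for every transition coupling (X̃,Ỹ) of X and Y, E[c(X̃₀,Ỹ₀)] ≥ E[c(X₀, f(X₀))], hence ρ(G₁,G₂) = ∑_{u∈U} c(u,f(u))·p(u). -/
/-- If `f` is a factor map from `G₁` to `G₂` and the cost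
`c : U × V → ℝ₊` is compatible with `f` (`c(u,f(u)) ≤ c(u,v)` for all `u, v`), then the
deterministic coupling `(X, f(X))` is an optimal transition coupling: every transition
coupling has expected cost at least `E[c(X₀, f(X₀))]`, and this value is attained, so
`ρ(G₁,G₂) = ∑_u c(u,f(u)) p(u)`. -/
theorem factor_compatible_cost_optimal
    {U V : Type*} [Fintype U] [Fintype V] [DecidableEq V]
    (P : U → U → ℝ) (Q : V → V → ℝ) (f : U → V) (p : U → ℝ) (q : V → ℝ)
    (c : U → V → ℝ)
    (hPnn : ∀ u u', 0 ≤ P u u') (hProw : ∀ u, ∑ u', P u u' = 1)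
    (hQnn : ∀ v v', 0 ≤ Q v v') (hQrow : ∀ v, ∑ v', Q v v' = 1)
    (hfac : ∀ (u : U) (v' : V),
      ∑ u' ∈ Finset.univ.filter (fun u' => f u' = v'), P u u' = Q (f u) v')
    (hpnn : ∀ u, 0 ≤ p u) (hpsum : ∑ u, p u = 1)
    (hpstat : ∀ u', ∑ u, p u * P u u' = p u')
    (hq : ∀ v, q v = ∑ u ∈ Finset.univ.filter (fun u => f u = v), p u)
    (hcnn : ∀ u v, 0 ≤ c u v)
    (hcompat : ∀ u v, c u (f u) ≤ c u v) :
    IsLeast {x : ℝ | ∃ (lam : U × V → ℝ) (R : U × V → U × V → ℝ),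
        IsTCStat P Q p q lam R ∧ x = ∑ a : U × V, lam a * c a.1 a.2}
      (∑ u, p u * c u (f u)) := by
  constructor
  · -- membership: the deterministic coupling
    refine ⟨fun a => if a.2 = f a.1 then p a.1 else 0,
      fun a b => if a.2 = f a.1 then (if b.2 = f b.1 then P a.1 b.1 else 0)
        else P a.1 b.1 * Q a.2 b.2, ?_, ?_⟩
    · refine ⟨?_, ?_, ?_, ?_, ?_, ?_, ?_, ?_⟩
      · intro a b
        by_cases h : a.2 = f a.1
        · simp only [h, if_true]
          by_cases h' : b.2 = f b.1 <;> simp [h', hPnn]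
        · simp only [h, if_false]
          exact mul_nonneg (hPnn _ _) (hQnn _ _)
      · intro a u'
        by_cases h : a.2 = f a.1
        · simp only [h, if_true]
          rw [Finset.sum_ite_eq' Finset.univ (f u') (fun _ => P a.1 u')]
          simp
        · simp only [h, if_false]
          rw [← Finset.mul_sum, hQrow, mul_one]
      · intro a v'
        by_cases h : a.2 = f a.1
        · simp only [h, if_true]
          rw [← hfac a.1 v', Finset.sum_filter]
          refine Finset.sum_congr rfl fun u' _ => ?_
          simp [eq_comm]
        · simp only [h, if_false]
          rw [← Finset.sum_mul, hProw, one_mul]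
      · intro a
        by_cases h : a.2 = f a.1 <;> simp [h, hpnn]
      · rw [Fintype.sum_prod_type]
        simp [hpsum]
      · intro b
        rw [Fintype.sum_prod_type]
        by_cases hb : b.2 = f b.1
        · simp only [hb, if_true]
          have : ∀ u : U, ∑ v : V, (if v = f u then p u else 0) *
              (if v = f u then P u b.1 else P u b.1 * Q v (f b.1)) = p u * P u b.1 := by
            intro u
            rw [Finset.sum_eq_single (f u)]
            · simp
            · intro v _ hv; simp [hv]
            · simp
          simp only [this]
          exact hpstat b.1
        · simp only [hb, if_false]
          have : ∀ u : U, ∑ v : V, (if v = f u then p u else 0) *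
              (if v = f u then (0 : ℝ) else P u b.1 * Q v b.2) = 0 := by
            intro u
            refine Finset.sum_eq_zero fun v _ => ?_
            by_cases h : v = f u <;> simp [h]
          simp only [this, Finset.sum_const_zero]
      · intro u
        rw [Finset.sum_eq_single (f u)] <;> simp +contextual
      · intro v
        rw [hq, Finset.sum_filter]
        refine Finset.sum_congr rfl fun u _ => ?_
        simp [eq_comm]
    · rw [Fintype.sum_prod_type]
      refine Finset.sum_congr rfl fun u _ => ?_
      rw [Finset.sum_eq_single (f u)] <;> simp +contextual
  · -- lower bound
    rintro x ⟨lam, R, ⟨hRnn, hR1, hR2, hlnn, hlsum, hstat, hm1, hm2⟩, rfl⟩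
    calc ∑ u, p u * c u (f u)
        = ∑ u, (∑ v, lam (u, v)) * c u (f u) := by
          refine Finset.sum_congr rfl fun u _ => ?_
          rw [hm1]
      _ = ∑ a : U × V, lam a * c a.1 (f a.1) := by
          rw [Fintype.sum_prod_type]
          simp [Finset.sum_mul]
      _ ≤ ∑ a : U × V, lam a * c a.1 a.2 :=
          Finset.sum_le_sum fun a _ =>
            mul_le_mul_of_nonneg_left (hcompat a.1 a.2) (hlnn a)
end

section
/- Suppose G₁, G₂, G₃ are strongly connected weighted directed networks with random walks X, Y, Z, and f: U → W, g: V → W are factor maps from G₁ to G₃ and G₂ to G₃, respectively. Then there exists a transition coupling (X̃,Ỹ) of X and Y such that f(X̃ₙ) = g(Ỹₙ) for all n almost surely. -/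
/-- Suppose `G₁, G₂, G₃` are strongly connected weighted directed networks
with random walks `X, Y, Z` (kernels `P, Q, S`, stationary distributions `p, q, r`), and
`f : U → W`, `g : V → W` are factor maps from `G₁` to `G₃` and from `G₂` to `G₃`.  Then
there exists a transition coupling `(X̃,Ỹ)` of `X` and `Y` (a stationary transition
coupling `(lam, R)`) such that `f(X̃ₙ) = g(Ỹₙ)` for all `n` almost surely: the coupling is
supported on `{(u,v) : f(u) = g(v)}` and its kernel never leaves this set. -/
theorem relatively_independent_transition_coupling
    {U V W : Type*} [Fintype U] [Fintype V] [Fintype W]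
    [DecidableEq U] [DecidableEq V] [DecidableEq W]
    (P : U → U → ℝ) (Q : V → V → ℝ) (S : W → W → ℝ)
    (f : U → W) (g : V → W) (p : U → ℝ) (q : V → ℝ) (r : W → ℝ)
    (hPnn : ∀ u u', 0 ≤ P u u') (hProw : ∀ u, ∑ u', P u u' = 1)
    (hQnn : ∀ v v', 0 ≤ Q v v') (hQrow : ∀ v, ∑ v', Q v v' = 1)
    (hSnn : ∀ w w', 0 ≤ S w w') (hSrow : ∀ w, ∑ w', S w w' = 1)
    (hffac : ∀ (u : U) (w' : W),
      ∑ u' ∈ Finset.univ.filter (fun u' => f u' = w'), P u u' = S (f u) w')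
    (hgfac : ∀ (v : V) (w' : W),
      ∑ v' ∈ Finset.univ.filter (fun v' => g v' = w'), Q v v' = S (g v) w')
    (hpnn : ∀ u, 0 ≤ p u) (hpsum : ∑ u, p u = 1)
    (hpstat : ∀ u', ∑ u, p u * P u u' = p u')
    (hqnn : ∀ v, 0 ≤ q v) (hqsum : ∑ v, q v = 1)
    (hqstat : ∀ v', ∑ v, q v * Q v v' = q v')
    (hrpos : ∀ w, 0 < r w) (hrsum : ∑ w, r w = 1)
    (hrstat : ∀ w', ∑ w, r w * S w w' = r w')
    (hpushf : ∀ w, ∑ u ∈ Finset.univ.filter (fun u => f u = w), p u = r w)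
    (hpushg : ∀ w, ∑ v ∈ Finset.univ.filter (fun v => g v = w), q v = r w) :
    ∃ (lam : U × V → ℝ) (R : U × V → U × V → ℝ),
      (∀ a b, 0 ≤ R a b) ∧
      (∀ (a : U × V) (u' : U), ∑ v' : V, R a (u', v') = P a.1 u') ∧
      (∀ (a : U × V) (v' : V), ∑ u' : U, R a (u', v') = Q a.2 v') ∧
      (∀ a, 0 ≤ lam a) ∧ (∑ a : U × V, lam a = 1) ∧
      (∀ b : U × V, ∑ a : U × V, lam a * R a b = lam b) ∧
      (∀ u, ∑ v, lam (u, v) = p u) ∧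
      (∀ v, ∑ u, lam (u, v) = q v) ∧
      (∀ u v, lam (u, v) ≠ 0 → f u = g v) ∧
      (∀ u v u' v', lam (u, v) ≠ 0 → R (u, v) (u', v') ≠ 0 → f u' = g v') := by

  classical
  -- the diagonal-preserving kernel
  set R : U × V → U × V → ℝ := fun a b =>
    if f a.1 = g a.2 then
      (if f b.1 = g b.2 then P a.1 b.1 * Q a.2 b.2 / S (f a.1) (f b.1) else 0)
    else P a.1 b.1 * Q a.2 b.2 with hRdef
  have hPle : ∀ u u', P u u' ≤ S (f u) (f u') := by
    intro u u'
    rw [← hffac u (f u')]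
    exact Finset.single_le_sum (fun i _ => hPnn u i)
      (Finset.mem_filter.mpr ⟨Finset.mem_univ _, rfl⟩)
  have hQle : ∀ v v', Q v v' ≤ S (g v) (g v') := by
    intro v v'
    rw [← hgfac v (g v')]
    exact Finset.single_le_sum (fun i _ => hQnn v i)
      (Finset.mem_filter.mpr ⟨Finset.mem_univ _, rfl⟩)
  have hRnn : ∀ a b, 0 ≤ R a b := by
    intro a b
    rw [hRdef]; dsimp only
    split
    · split
      · exact div_nonneg (mul_nonneg (hPnn _ _) (hQnn _ _)) (hSnn _ _)
      · exact le_refl 0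
    · exact mul_nonneg (hPnn _ _) (hQnn _ _)
  -- marginal over v'
  have hRmargU : ∀ (a : U × V) (u' : U), ∑ v' : V, R a (u', v') = P a.1 u' := by
    intro a u'
    rw [hRdef]; dsimp only
    by_cases h : f a.1 = g a.2
    · simp only [if_pos h]
      by_cases hs : S (f a.1) (f u') = 0
      · have hP0 : P a.1 u' = 0 := le_antisymm (hs ▸ hPle a.1 u') (hPnn _ _)
        simp [hP0]
      · have : ∀ v' : V, (if f u' = g v' then P a.1 u' * Q a.2 v' / S (f a.1) (f u') else 0)
            = (if g v' = f u' then Q a.2 v' else 0) * (P a.1 u' / S (f a.1) (f u')) := by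
          intro v'
          by_cases hv : f u' = g v'
          · rw [if_pos hv, if_pos hv.symm]; ring
          · rw [if_neg hv, if_neg (fun hc => hv hc.symm), zero_mul]
        rw [Finset.sum_congr rfl (fun v' _ => this v'), ← Finset.sum_mul,
          ← Finset.sum_filter, hgfac a.2 (f u'), ← h]
        rw [mul_comm, div_mul_cancel₀ _ hs]
    · simp only [if_neg h]
      rw [← Finset.mul_sum, hQrow, mul_one]
  -- marginal over u'
  have hRmargV : ∀ (a : U × V) (v' : V), ∑ u' : U, R a (u', v') = Q a.2 v' := by
    intro a v'
    rw [hRdef]; dsimp only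
    by_cases h : f a.1 = g a.2
    · simp only [if_pos h]
      by_cases hs : S (g a.2) (g v') = 0
      · have hQ0 : Q a.2 v' = 0 := le_antisymm (hs ▸ hQle a.2 v') (hQnn _ _)
        have : ∀ u' : U, (if f u' = g v' then P a.1 u' * Q a.2 v' / S (f a.1) (f u') else 0) = 0 := by
          intro u'; by_cases hu : f u' = g v'
          · rw [if_pos hu, hQ0]; ring
          · rw [if_neg hu]
        rw [Finset.sum_congr rfl (fun u' _ => this u'), Finset.sum_const, smul_zero, hQ0]
      · have : ∀ u' : U, (if f u' = g v' then P a.1 u' * Q a.2 v' / S (f a.1) (f u') else 0)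
            = (if f u' = g v' then P a.1 u' else 0) * (Q a.2 v' / S (g a.2) (g v')) := by
          intro u'
          by_cases hu : f u' = g v'
          · rw [if_pos hu, if_pos hu, hu, h]; ring
          · rw [if_neg hu, if_neg hu, zero_mul]
        rw [Finset.sum_congr rfl (fun u' _ => this u'), ← Finset.sum_mul,
          ← Finset.sum_filter, hffac a.1 (g v'), h]
        rw [mul_comm, div_mul_cancel₀ _ hs]
    · simp only [if_neg h]
      rw [← Finset.sum_mul, hProw, one_mul]
  -- the transfer operator and key invariant class
  set T : ((U × V) → ℝ) → ((U × V) → ℝ) := fun μ b => ∑ a, μ a * R a b with hTdef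
  set Kp : ((U × V) → ℝ) → Prop := fun μ =>
    (∀ a, 0 ≤ μ a) ∧ (∀ u, ∑ v, μ (u, v) = p u) ∧ (∀ v, ∑ u, μ (u, v) = q v) ∧
    (∀ a : U × V, ¬ f a.1 = g a.2 → μ a = 0) with hKpdef
  set lam0 : (U × V) → ℝ := fun a => if f a.1 = g a.2 then p a.1 * q a.2 / r (f a.1) else 0
    with hlam0def
  have hK0 : Kp lam0 := by
    rw [hKpdef]; dsimp only
    refine ⟨?_, ?_, ?_, ?_⟩
    · intro a
      rw [hlam0def]; dsimp only
      split
      · exact div_nonneg (mul_nonneg (hpnn _) (hqnn _)) (hrpos _).le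
      · exact le_refl 0
    · intro u
      rw [hlam0def]; dsimp only
      have : ∀ v : V, (if f u = g v then p u * q v / r (f u) else 0)
          = (if g v = f u then q v else 0) * (p u / r (f u)) := by
        intro v
        by_cases hv : f u = g v
        · rw [if_pos hv, if_pos hv.symm]; ring
        · rw [if_neg hv, if_neg (fun hc => hv hc.symm), zero_mul]
      rw [Finset.sum_congr rfl (fun v _ => this v), ← Finset.sum_mul,
        ← Finset.sum_filter, hpushg (f u)]
      rw [mul_comm, div_mul_cancel₀ _ (hrpos (f u)).ne']
    · intro v
      rw [hlam0def]; dsimp only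
      have : ∀ u : U, (if f u = g v then p u * q v / r (f u) else 0)
          = (if f u = g v then p u else 0) * (q v / r (g v)) := by
        intro u
        by_cases hu : f u = g v
        · rw [if_pos hu, if_pos hu, hu]; ring
        · rw [if_neg hu, if_neg hu, zero_mul]
      rw [Finset.sum_congr rfl (fun u _ => this u), ← Finset.sum_mul,
        ← Finset.sum_filter, hpushf (g v)]
      rw [mul_comm, div_mul_cancel₀ _ (hrpos (g v)).ne']
    · intro a ha
      rw [hlam0def]; dsimp only
      rw [if_neg ha]
  have hKT : ∀ μ, Kp μ → Kp (T μ) := by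
    intro μ hμ
    rw [hKpdef] at hμ ⊢
    obtain ⟨h1, h2, h3, h4⟩ := hμ
    refine ⟨?_, ?_, ?_, ?_⟩
    · intro b
      exact Finset.sum_nonneg fun a _ => mul_nonneg (h1 a) (hRnn a b)
    · intro u'
      rw [hTdef]; dsimp only
      rw [Finset.sum_comm]
      have : ∀ a : U × V, ∑ v' : V, μ a * R a (u', v') = μ a * P a.1 u' := by
        intro a; rw [← Finset.mul_sum, hRmargU]
      rw [Finset.sum_congr rfl (fun a _ => this a), ← hpstat u', Fintype.sum_prod_type]
      exact Finset.sum_congr rfl fun u _ => by rw [← h2 u, Finset.sum_mul]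
    · intro v'
      rw [hTdef]; dsimp only
      rw [Finset.sum_comm]
      have : ∀ a : U × V, ∑ u' : U, μ a * R a (u', v') = μ a * Q a.2 v' := by
        intro a; rw [← Finset.mul_sum, hRmargV]
      rw [Finset.sum_congr rfl (fun a _ => this a), ← hqstat v']
      rw [Fintype.sum_prod_type_right]
      exact Finset.sum_congr rfl fun v _ => by rw [← h3 v, Finset.sum_mul]
    · intro b hb
      rw [hTdef]; dsimp only
      refine Finset.sum_eq_zero fun a _ => ?_
      by_cases ha : f a.1 = g a.2
      · rw [hRdef]; dsimp only
        rw [if_pos ha, if_neg hb, mul_zero]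
      · rw [h4 a ha, zero_mul]
  -- the iterates
  set x : ℕ → (U × V) → ℝ := fun n => T^[n] lam0 with hxdef
  have hKx : ∀ n, Kp (x n) := by
    intro n
    induction n with
    | zero => exact hK0
    | succ n ih =>
      have hstep : x (n + 1) = T (x n) := Function.iterate_succ_apply' T n lam0
      rw [hstep]
      exact hKT _ ih
  have hxsucc : ∀ n, x (n + 1) = T (x n) := by
    intro n; exact Function.iterate_succ_apply' T n lam0
  have hKsum : ∀ μ, Kp μ → ∑ a : U × V, μ a = 1 := by
    intro μ hμ
    rw [Fintype.sum_prod_type]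
    rw [Finset.sum_congr rfl fun u _ => hμ.2.1 u]
    exact hpsum
  have hKle1 : ∀ μ, Kp μ → ∀ a, μ a ≤ 1 := by
    intro μ hμ a
    rw [← hKsum μ hμ]
    exact Finset.single_le_sum (fun i _ => hμ.1 i) (Finset.mem_univ a)
  -- Cesàro averages
  set y : ℕ → (U × V) → ℝ := fun n a => (∑ k ∈ Finset.range (n + 1), x k a) / (n + 1)
    with hydef
  have hnpos : ∀ n : ℕ, (0 : ℝ) < (n : ℝ) + 1 := fun n => by positivity
  have hKy : ∀ n, Kp (y n) := by
    intro n
    rw [hKpdef]; dsimp only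
    refine ⟨?_, ?_, ?_, ?_⟩
    · intro a
      rw [hydef]; dsimp only
      exact div_nonneg (Finset.sum_nonneg fun k _ => (hKx k).1 a) (hnpos n).le
    · intro u
      rw [hydef]; dsimp only
      rw [← Finset.sum_div, Finset.sum_comm]
      rw [Finset.sum_congr rfl fun k _ => (hKx k).2.1 u]
      rw [Finset.sum_const, Finset.card_range, nsmul_eq_mul]
      field_simp
      push_cast; ring
    · intro v
      rw [hydef]; dsimp only
      rw [← Finset.sum_div, Finset.sum_comm]
      rw [Finset.sum_congr rfl fun k _ => (hKx k).2.2.1 v]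
      rw [Finset.sum_const, Finset.card_range, nsmul_eq_mul]
      field_simp
      push_cast; ring
    · intro a ha
      rw [hydef]; dsimp only
      rw [Finset.sum_congr rfl fun k _ => (hKx k).2.2.2 a ha, Finset.sum_const, smul_zero,
        zero_div]
  -- compactness: extract a convergent subsequence of the averages
  have hC : IsCompact (Set.pi Set.univ fun _ : U × V => Set.Icc (0 : ℝ) 1) :=
    isCompact_univ_pi fun _ => isCompact_Icc
  have hyC : ∀ n, y n ∈ Set.pi Set.univ fun _ : U × V => Set.Icc (0 : ℝ) 1 := by
    intro n
    intro a _
    exact ⟨(hKy n).1 a, hKle1 _ (hKy n) a⟩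
  obtain ⟨lam, hlamC, φ, hφ, hconv⟩ := hC.tendsto_subseq hyC
  have hconv' : ∀ a : U × V, Filter.Tendsto (fun n => y (φ n) a) Filter.atTop (nhds (lam a)) :=
    fun a => tendsto_pi_nhds.mp hconv a
  -- T (y n) = y n + (x (n+1) - x 0)/(n+1)
  have hTy : ∀ n b, T (y n) b = y n b + (x (n + 1) b - x 0 b) / (n + 1) := by
    intro n b
    have h1 : T (y n) b = (∑ k ∈ Finset.range (n + 1), x (k + 1) b) / (n + 1) := by
      have e1 : ∀ a : U × V, y n a * R a b
          = (∑ k ∈ Finset.range (n + 1), x k a * R a b) / (n + 1) := by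
        intro a
        rw [hydef]; dsimp only
        rw [div_mul_eq_mul_div, Finset.sum_mul]
      rw [hTdef]; dsimp only
      rw [Finset.sum_congr rfl fun a _ => e1 a, ← Finset.sum_div, Finset.sum_comm]
      congr 1
      refine Finset.sum_congr rfl fun k _ => ?_
      rw [hxsucc k]
    rw [h1, hydef]; dsimp only
    rw [← add_div]
    congr 1
    have htel := Finset.sum_range_sub (fun k => x k b) (n + 1)
    rw [Finset.sum_sub_distrib] at htel
    linarith
  -- limit of the error term is 0
  have herr : ∀ b : U × V, Filter.Tendsto
      (fun n => (x (φ n + 1) b - x 0 b) / (φ n + 1)) Filter.atTop (nhds 0) := by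
    intro b
    have hb : ∀ n : ℕ, |(x (φ n + 1) b - x 0 b) / ((φ n : ℝ) + 1)| ≤ 1 / ((n : ℝ) + 1) := by
      intro n
      rw [abs_div, abs_of_pos (hnpos (φ n))]
      have h1 : |x (φ n + 1) b - x 0 b| ≤ 1 := by
        rw [abs_le]
        constructor
        · have := hKle1 _ (hKx 0) b; have := (hKx (φ n + 1)).1 b; linarith
        · have := hKle1 _ (hKx (φ n + 1)) b; have := (hKx 0).1 b; linarith
      have h2 : (n : ℝ) + 1 ≤ (φ n : ℝ) + 1 := by
        have hn : n ≤ φ n := hφ.le_apply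
        have : (n : ℝ) ≤ (φ n : ℝ) := Nat.cast_le.mpr hn
        linarith
      calc |x (φ n + 1) b - x 0 b| / ((φ n : ℝ) + 1)
          ≤ 1 / ((φ n : ℝ) + 1) :=
            div_le_div_of_nonneg_right h1 (hnpos (φ n)).le
        _ ≤ 1 / ((n : ℝ) + 1) :=
            one_div_le_one_div_of_le (hnpos n) h2
    refine squeeze_zero_norm (fun n => ?_) tendsto_one_div_add_atTop_nhds_zero_nat
    rw [Real.norm_eq_abs]
    exact hb n
  -- conclude stationarity of lam
  have hstat : ∀ b : U × V, T lam b = lam b := by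
    intro b
    have hlim1 : Filter.Tendsto (fun n => T (y (φ n)) b) Filter.atTop (nhds (T lam b)) := by
      rw [hTdef]; dsimp only
      exact tendsto_finset_sum _ fun a _ => (hconv' a).mul_const (R a b)
    have hlim2 : Filter.Tendsto (fun n => T (y (φ n)) b) Filter.atTop (nhds (lam b)) := by
      have : (fun n => T (y (φ n)) b)
          = fun n => y (φ n) b + (x (φ n + 1) b - x 0 b) / (φ n + 1) := by
        funext n; exact hTy (φ n) b
      rw [this]
      have := (hconv' b).add (herr b)
      simpa using this
    exact tendsto_nhds_unique hlim1 hlim2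
  -- properties of lam by passing to the limit
  have hlamnn : ∀ a, 0 ≤ lam a := by
    intro a
    exact ge_of_tendsto' (hconv' a) fun n => (hKy (φ n)).1 a
  have hlammargU : ∀ u, ∑ v, lam (u, v) = p u := by
    intro u
    have h1 : Filter.Tendsto (fun n => ∑ v, y (φ n) (u, v)) Filter.atTop
        (nhds (∑ v, lam (u, v))) := tendsto_finset_sum _ fun v _ => hconv' (u, v)
    have h2 : (fun n => ∑ v, y (φ n) (u, v)) = fun _ => p u := by
      funext n; exact (hKy (φ n)).2.1 u
    rw [h2] at h1
    exact tendsto_nhds_unique h1 tendsto_const_nhds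
  have hlammargV : ∀ v, ∑ u, lam (u, v) = q v := by
    intro v
    have h1 : Filter.Tendsto (fun n => ∑ u, y (φ n) (u, v)) Filter.atTop
        (nhds (∑ u, lam (u, v))) := tendsto_finset_sum _ fun u _ => hconv' (u, v)
    have h2 : (fun n => ∑ u, y (φ n) (u, v)) = fun _ => q v := by
      funext n; exact (hKy (φ n)).2.2.1 v
    rw [h2] at h1
    exact tendsto_nhds_unique h1 tendsto_const_nhds
  have hlamsupp : ∀ a : U × V, ¬ f a.1 = g a.2 → lam a = 0 := by
    intro a ha
    have h2 : (fun n => y (φ n) a) = fun _ => (0 : ℝ) := by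
      funext n; exact (hKy (φ n)).2.2.2 a ha
    have h1 := hconv' a
    rw [h2] at h1
    exact tendsto_nhds_unique h1 tendsto_const_nhds
  have hlamsum : ∑ a : U × V, lam a = 1 := by
    rw [Fintype.sum_prod_type, Finset.sum_congr rfl fun u _ => hlammargU u]
    exact hpsum
  refine ⟨lam, R, hRnn, hRmargU, hRmargV, hlamnn, hlamsum, ?_, hlammargU, hlammargV, ?_, ?_⟩
  · intro b
    exact hstat b
  · intro u v h
    by_contra hc
    exact h (hlamsupp (u, v) hc)
  · intro u v u' v' h1 h2
    have hd : f u = g v := by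
      by_contra hc
      exact h1 (hlamsupp (u, v) hc)
    by_contra hc
    apply h2
    rw [hRdef]; dsimp only
    rw [if_pos hd, if_neg hc]
end

section
/- Let f: U → A and g: V → B be factor maps from G₁ to H₁ and G₂ to H₂, with costs satisfying c_ext(u,v) = c(f(u),g(v)). Then the optimal transition coupling costs agree: min over transition couplings of (X,Y) of E[c_ext(X̃₀,Ỹ₀)] equals min over transition couplings of (W,Z) of E[c(W̃₀,Z̃₀)]; moreover, for every optimal transition coupling (W̃,Z̃) of W and Z there is an optimal transition coupling (X̃,Ỹ) of X and Y with (f(X̃), g(Ỹ)) equal in distribution to (W̃,Z̃). -/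
section FactorHelpers

open Finset

/-- safe division -/
noncomputable def d0 (x y : ℝ) : ℝ := if y = 0 then 0 else x / y

lemma d0_nonneg {x y : ℝ} (hx : 0 ≤ x) (hy : 0 ≤ y) : 0 ≤ d0 x y := by
  unfold d0; split
  · exact le_refl _
  · exact div_nonneg hx hy

lemma d0_mul_cancel {x y : ℝ} (h : y = 0 → x = 0) : d0 x y * y = x := by
  by_cases hy : y = 0
  · simp [d0, hy, h hy]
  · simp [d0, hy, div_mul_cancel₀ x hy]

lemma sum_d0 {ι : Type*} (s : Finset ι) (x : ι → ℝ) (y : ℝ) :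
    ∑ i ∈ s, d0 (x i) y = d0 (∑ i ∈ s, x i) y := by
  by_cases hy : y = 0 <;> simp [d0, hy, Finset.sum_div]

lemma d0_self_mul {x t : ℝ} (h : x = 0 → t = 0) : t * d0 x x = t := by
  by_cases hx : x = 0
  · simp [d0, hx, h hx]
  · simp [d0, hx, div_self hx]

lemma sum_mul_d0_fiber {V B : Type*} [Fintype V] [Fintype B] [DecidableEq B]
    (g : V → B) (T : B → ℝ) (w : V → ℝ) (wB : B → ℝ)
    (hw : ∀ b, ∑ v ∈ univ.filter (fun v => g v = b), w v = wB b)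
    (hT0 : ∀ b, wB b = 0 → T b = 0) :
    ∑ v : V, T (g v) * d0 (w v) (wB (g v)) = ∑ b : B, T b := by
  rw [← Finset.sum_fiberwise univ g (fun v => T (g v) * d0 (w v) (wB (g v)))]
  refine Finset.sum_congr rfl fun b _ => ?_
  have h1 : ∀ v ∈ univ.filter (fun v => g v = b),
      T (g v) * d0 (w v) (wB (g v)) = T b * d0 (w v) (wB b) := by
    intro v hv; rw [(Finset.mem_filter.1 hv).2]
  rw [Finset.sum_congr rfl h1, ← Finset.mul_sum, sum_d0, hw]
  exact d0_self_mul (hT0 b)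

lemma sum_fiber_prod_d0 {U V A B : Type*} [Fintype U] [Fintype V] [DecidableEq A] [DecidableEq B]
    (f : U → A) (g : V → B) (F : A → B → ℝ)
    (w : U → ℝ) (wA : A → ℝ) (x : V → ℝ) (xB : B → ℝ)
    (hw : ∀ a, ∑ u ∈ univ.filter (fun u => f u = a), w u = wA a)
    (hx : ∀ b, ∑ v ∈ univ.filter (fun v => g v = b), x v = xB b)
    (a' : A) (b' : B)
    (hFa : wA a' = 0 → F a' b' = 0) (hFb : xB b' = 0 → F a' b' = 0) :
    ∑ z ∈ univ.filter (fun z : U × V => f z.1 = a' ∧ g z.2 = b'),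
      F (f z.1) (g z.2) * (d0 (w z.1) (wA (f z.1)) * d0 (x z.2) (xB (g z.2))) = F a' b' := by
  have hfilter : univ.filter (fun z : U × V => f z.1 = a' ∧ g z.2 = b')
      = (univ.filter (fun u => f u = a')) ×ˢ (univ.filter (fun v => g v = b')) := by
    rw [← Finset.univ_product_univ]
    exact Finset.filter_product (fun u => f u = a') (fun v => g v = b')
  rw [hfilter, Finset.sum_product]
  have h2 : ∀ u ∈ univ.filter (fun u => f u = a'),
      (∑ v ∈ univ.filter (fun v => g v = b'),
        F (f u) (g v) * (d0 (w u) (wA (f u)) * d0 (x v) (xB (g v))))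
      = (F a' b' * d0 (xB b') (xB b')) * d0 (w u) (wA a') := by
    intro u hu
    have hfu := (Finset.mem_filter.1 hu).2
    have h1 : ∀ v ∈ univ.filter (fun v => g v = b'),
        F (f u) (g v) * (d0 (w u) (wA (f u)) * d0 (x v) (xB (g v)))
        = (F a' b' * d0 (w u) (wA a')) * d0 (x v) (xB b') := by
      intro v hv; rw [(Finset.mem_filter.1 hv).2, hfu]; ring
    rw [Finset.sum_congr rfl h1, ← Finset.mul_sum, sum_d0, hx]; ring
  rw [Finset.sum_congr rfl h2, ← Finset.mul_sum, sum_d0, hw]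
  by_cases ha : wA a' = 0
  · simp [d0, ha, hFa ha]
  · by_cases hb : xB b' = 0
    · simp [d0, hb, hFb hb]
    · simp [d0, ha, hb]

lemma sum_mul_comp_fiber {U A : Type*} [Fintype U] [Fintype A] [DecidableEq A]
    (f : U → A) (μ : U → ℝ) (T : A → ℝ) :
    ∑ u : U, μ u * T (f u) = ∑ a : A, (∑ u ∈ univ.filter (fun u => f u = a), μ u) * T a := by
  rw [← Finset.sum_fiberwise univ f (fun u => μ u * T (f u))]
  refine Finset.sum_congr rfl fun a _ => ?_
  rw [Finset.sum_mul]
  exact Finset.sum_congr rfl fun u hu => by rw [(Finset.mem_filter.1 hu).2]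

lemma sum_ite_const_cond {ι : Type*} (s : Finset ι) (c : Prop) [Decidable c] (F : ι → ℝ) :
    ∑ i ∈ s, (if c then F i else 0) = if c then ∑ i ∈ s, F i else 0 := by
  split <;> simp

lemma sum_filter_and_right {ι κ : Type*} [Fintype ι] [Fintype κ] [DecidableEq κ]
    (p : ι → Prop) [DecidablePred p] (gk : ι → κ) (F : ι → ℝ) :
    ∑ j : κ, ∑ i ∈ Finset.univ.filter (fun i => p i ∧ gk i = j), F i
      = ∑ i ∈ Finset.univ.filter p, F i := by
  have h : ∀ j : κ, Finset.univ.filter (fun i => p i ∧ gk i = j)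
      = (Finset.univ.filter p).filter (fun i => gk i = j) := by
    intro j; rw [Finset.filter_filter]
  simp_rw [h]
  exact Finset.sum_fiberwise _ _ _

lemma path_push {U V A B : Type*} [Fintype U] [Fintype V] [DecidableEq A] [DecidableEq B]
    (f : U → A) (g : V → B)
    (R : U × V → U × V → ℝ) (RH : A × B → A × B → ℝ)
    (hR : ∀ (z : U × V) (ab : A × B),
      ∑ z' ∈ Finset.univ.filter (fun z' : U × V => f z'.1 = ab.1 ∧ g z'.2 = ab.2), R z z'
        = RH (f z.1, g z.2) ab) :
    ∀ (n : ℕ) (ν : U × V → ℝ) (νH : A × B → ℝ),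
      (∀ ab : A × B, ∑ z ∈ Finset.univ.filter
          (fun z : U × V => f z.1 = ab.1 ∧ g z.2 = ab.2), ν z = νH ab) →
      ∀ (ab : Fin (n + 1) → A × B),
      ∑ z ∈ Finset.univ.filter
          (fun z : Fin (n + 1) → U × V => ∀ i, f (z i).1 = (ab i).1 ∧ g (z i).2 = (ab i).2),
        ν (z 0) * ∏ i : Fin n, R (z i.castSucc) (z i.succ)
        = νH (ab 0) * ∏ i : Fin n, RH (ab i.castSucc) (ab i.succ) := by
  intro n
  induction n with
  | zero =>
    intro ν νH hν ab
    have e := Fintype.sum_equiv (Equiv.funUnique (Fin 1) (U × V))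
      (fun z : Fin 1 → U × V => if (∀ i, f (z i).1 = (ab i).1 ∧ g (z i).2 = (ab i).2)
          then ν (z 0) * ∏ i : Fin 0, R (z i.castSucc) (z i.succ) else 0)
      (fun w : U × V => if f w.1 = (ab 0).1 ∧ g w.2 = (ab 0).2 then ν w else 0)
      (fun z => by simp [Fin.forall_fin_one, Equiv.funUnique])
    rw [Finset.sum_filter, e, ← Finset.sum_filter, hν (ab 0)]
    simp
  | succ n IH =>
    intro ν νH hν ab
    rw [Finset.sum_filter]
    rw [Fintype.sum_equiv ((Fin.consEquiv (fun _ : Fin (n + 2) => U × V)).symm) _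
      (fun xy : (U × V) × (Fin (n + 1) → U × V) =>
        (if f xy.1.1 = (ab 0).1 ∧ g xy.1.2 = (ab 0).2 then ν xy.1 else 0) *
        (if (∀ i : Fin (n + 1), f (xy.2 i).1 = (ab i.succ).1 ∧ g (xy.2 i).2 = (ab i.succ).2)
          then R xy.1 (xy.2 0) * ∏ i : Fin n, R (xy.2 i.castSucc) (xy.2 i.succ) else 0))
      (fun z => by
        rw [show (Fin.consEquiv (fun _ : Fin (n + 2) => U × V)).symm z = (z 0, Fin.tail z) from rfl]
        rw [ite_zero_mul_ite_zero]
        refine if_congr ?_ ?_ rfl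
        · rw [Fin.forall_fin_succ]
          simp [Fin.consEquiv, Fin.tail]
        · rw [Fin.prod_univ_succ]
          simp [Fin.consEquiv, Fin.tail, mul_assoc])]
    rw [Fintype.sum_prod_type]
    have hinner : ∀ x : U × V,
        (∑ y : Fin (n + 1) → U × V,
          (if f x.1 = (ab 0).1 ∧ g x.2 = (ab 0).2 then ν x else 0) *
          (if (∀ i : Fin (n + 1), f (y i).1 = (ab i.succ).1 ∧ g (y i).2 = (ab i.succ).2)
            then R x (y 0) * ∏ i : Fin n, R (y i.castSucc) (y i.succ) else 0))
        = (if f x.1 = (ab 0).1 ∧ g x.2 = (ab 0).2 then ν x else 0) *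
          (RH (f x.1, g x.2) (ab 1) *
            ∏ i : Fin n, RH (ab i.castSucc.succ) (ab i.succ.succ)) := by
      intro x
      rw [← Finset.mul_sum]
      congr 1
      rw [← Finset.sum_filter]
      have := IH (fun z' => R x z') (RH (f x.1, g x.2)) (hR x) (fun i => ab i.succ)
      rw [this]
      simp
    rw [Finset.sum_congr rfl (fun x _ => hinner x)]
    have hK : ∀ x : U × V,
        (if f x.1 = (ab 0).1 ∧ g x.2 = (ab 0).2 then ν x else 0) *
          (RH (f x.1, g x.2) (ab 1) *
            ∏ i : Fin n, RH (ab i.castSucc.succ) (ab i.succ.succ))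
        = (if f x.1 = (ab 0).1 ∧ g x.2 = (ab 0).2 then ν x else 0) *
          (RH (ab 0) (ab 1) * ∏ i : Fin n, RH (ab i.castSucc.succ) (ab i.succ.succ)) := by
      intro x
      by_cases h1 : f x.1 = (ab 0).1 ∧ g x.2 = (ab 0).2
      · have : (f x.1, g x.2) = ab 0 := Prod.ext h1.1 h1.2
        rw [this]
      · simp [h1]
    rw [Finset.sum_congr rfl (fun x _ => hK x), ← Finset.sum_mul, ← Finset.sum_filter,
      hν (ab 0), Fin.prod_univ_succ]
    simp [mul_assoc]

lemma sum_filter_and_left {ι κ : Type*} [Fintype ι] [Fintype κ] [DecidableEq κ]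
    (p : ι → Prop) [DecidablePred p] (gk : ι → κ) (F : ι → ℝ) :
    ∑ j : κ, ∑ i ∈ Finset.univ.filter (fun i => gk i = j ∧ p i), F i
      = ∑ i ∈ Finset.univ.filter p, F i := by
  have h : ∀ j : κ, Finset.univ.filter (fun i => gk i = j ∧ p i)
      = Finset.univ.filter (fun i => p i ∧ gk i = j) := by
    intro j
    apply Finset.filter_congr
    intro i _
    exact and_comm
  simp_rw [h]
  exact sum_filter_and_right p gk F

lemma project_TC {U V A B : Type*} [Fintype U] [Fintype V] [Fintype A] [Fintype B]
    [DecidableEq A] [DecidableEq B]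
    (P : U → U → ℝ) (Q : V → V → ℝ) (PH : A → A → ℝ) (QH : B → B → ℝ)
    (f : U → A) (g : V → B) (p : U → ℝ) (q : V → ℝ) (pH : A → ℝ) (qH : B → ℝ)
    (hPHnn : ∀ a a', 0 ≤ PH a a') (hPHrow : ∀ a, ∑ a', PH a a' = 1)
    (hQHnn : ∀ b b', 0 ≤ QH b b') (hQHrow : ∀ b, ∑ b', QH b b' = 1)
    (hffac : ∀ (u : U) (a' : A),
      ∑ u' ∈ Finset.univ.filter (fun u' => f u' = a'), P u u' = PH (f u) a')
    (hgfac : ∀ (v : V) (b' : B),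
      ∑ v' ∈ Finset.univ.filter (fun v' => g v' = b'), Q v v' = QH (g v) b')
    (hpushf : ∀ a, ∑ u ∈ Finset.univ.filter (fun u => f u = a), p u = pH a)
    (hpushg : ∀ b, ∑ v ∈ Finset.univ.filter (fun v => g v = b), q v = qH b)
    (lam : U × V → ℝ) (R : U × V → U × V → ℝ)
    (h : IsTCStat P Q p q lam R) :
    ∃ (lamH' : A × B → ℝ) (RH' : A × B → A × B → ℝ),
      IsTCStat PH QH pH qH lamH' RH' ∧
      ∀ T : A × B → ℝ, ∑ z : U × V, lam z * T (f z.1, g z.2) = ∑ ab : A × B, lamH' ab * T ab := by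
  obtain ⟨hRnn, hRrow, hRcol, hlnn, hlsum, hlstat, hlmU, hlmV⟩ := h
  set Fib : A × B → Finset (U × V) :=
    fun ab => Finset.univ.filter (fun z : U × V => f z.1 = ab.1 ∧ g z.2 = ab.2) with hFib
  have fib_eq : ∀ ab : A × B,
      Fib ab = Finset.univ.filter (fun z : U × V => (f z.1, g z.2) = ab) := by
    intro ab
    apply Finset.filter_congr
    intro z _
    simp [Prod.ext_iff]
  set lamH' : A × B → ℝ := fun ab => ∑ z ∈ Fib ab, lam z with hlamH'
  set num : A × B → A × B → ℝ :=
    fun ab ab' => ∑ z ∈ Fib ab, ∑ z' ∈ Fib ab', lam z * R z z' with hnum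
  set RH' : A × B → A × B → ℝ := fun ab ab' =>
    if lamH' ab = 0 then PH ab.1 ab'.1 * QH ab.2 ab'.2 else num ab ab' / lamH' ab with hRH'
  have hlamH'nn : ∀ ab, 0 ≤ lamH' ab := fun ab => Finset.sum_nonneg fun z _ => hlnn z
  have hlz : ∀ ab, lamH' ab = 0 → ∀ z ∈ Fib ab, lam z = 0 := by
    intro ab hab
    exact (Finset.sum_eq_zero_iff_of_nonneg (fun z _ => hlnn z)).1 hab
  have hnum0 : ∀ ab ab', lamH' ab = 0 → num ab ab' = 0 := by
    intro ab ab' hab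
    apply Finset.sum_eq_zero
    intro z hz
    apply Finset.sum_eq_zero
    intro z' _
    rw [hlz ab hab z hz, zero_mul]
  have hnumnn : ∀ ab ab', 0 ≤ num ab ab' :=
    fun ab ab' => Finset.sum_nonneg fun z _ => Finset.sum_nonneg fun z' _ =>
      mul_nonneg (hlnn z) (hRnn z z')
  have hmul : ∀ ab ab', lamH' ab * RH' ab ab' = num ab ab' := by
    intro ab ab'
    by_cases hab : lamH' ab = 0
    · rw [hab, zero_mul, hnum0 ab ab' hab]
    · rw [hRH']
      simp only [hab, if_false]
      field_simp
  -- row sums of R over fibers of f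
  have hRzrow : ∀ (z : U × V) (a' : A),
      ∑ z' ∈ Finset.univ.filter (fun z' : U × V => f z'.1 = a'), R z z' = PH (f z.1) a' := by
    intro z a'
    rw [Finset.sum_filter, Fintype.sum_prod_type]
    have : ∀ u' : U, (∑ v' : V, if f u' = a' then R z (u', v') else 0)
        = if f u' = a' then P z.1 u' else 0 := by
      intro u'
      rw [sum_ite_const_cond, hRrow z u']
    rw [Finset.sum_congr rfl (fun u' _ => this u'), ← Finset.sum_filter, hffac z.1 a']
  have hRzcol : ∀ (z : U × V) (b' : B),
      ∑ z' ∈ Finset.univ.filter (fun z' : U × V => g z'.2 = b'), R z z' = QH (g z.2) b' := by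
    intro z b'
    rw [Finset.sum_filter, Fintype.sum_prod_type, Finset.sum_comm]
    have : ∀ v' : V, (∑ u' : U, if g v' = b' then R z (u', v') else 0)
        = if g v' = b' then Q z.2 v' else 0 := by
      intro v'
      rw [sum_ite_const_cond, hRcol z v']
    rw [Finset.sum_congr rfl (fun v' _ => this v'), ← Finset.sum_filter, hgfac z.2 b']
  refine ⟨lamH', RH', ⟨?_, ?_, ?_, hlamH'nn, ?_, ?_, ?_, ?_⟩, ?_⟩
  · -- RH' nonneg
    intro ab ab'
    by_cases hab : lamH' ab = 0
    · simp only [hRH', hab, if_true]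
      exact mul_nonneg (hPHnn _ _) (hQHnn _ _)
    · simp only [hRH', hab, if_false]
      exact div_nonneg (hnumnn ab ab') (hlamH'nn ab)
  · -- row marginals
    intro ab a'
    by_cases hab : lamH' ab = 0
    · simp only [hRH', hab, if_true]
      rw [← Finset.mul_sum, hQHrow, mul_one]
    · simp only [hRH', hab, if_false]
      rw [← Finset.sum_div]
      have : ∑ b' : B, num ab (a', b') = lamH' ab * PH ab.1 a' := by
        rw [hnum]
        simp only
        rw [Finset.sum_comm]
        have inner : ∀ z ∈ Fib ab,
            (∑ b' : B, ∑ z' ∈ Fib (a', b'), lam z * R z z') = lam z * PH ab.1 a' := by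
          intro z hz
          have hz1 : f z.1 = ab.1 := ((Finset.mem_filter.1 hz).2).1
          rw [sum_filter_and_right (fun z' : U × V => f z'.1 = a') (fun z' => g z'.2) _,
            ← Finset.mul_sum, hRzrow z a', hz1]
        rw [Finset.sum_congr rfl inner, ← Finset.sum_mul]
      rw [this, mul_comm, mul_div_assoc, div_self hab, mul_one]
  · -- column marginals
    intro ab b'
    by_cases hab : lamH' ab = 0
    · simp only [hRH', hab, if_true]
      rw [← Finset.sum_mul, hPHrow, one_mul]
    · simp only [hRH', hab, if_false]
      rw [← Finset.sum_div]
      have : ∑ a' : A, num ab (a', b') = lamH' ab * QH ab.2 b' := by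
        rw [hnum]
        simp only
        rw [Finset.sum_comm]
        have inner : ∀ z ∈ Fib ab,
            (∑ a' : A, ∑ z' ∈ Fib (a', b'), lam z * R z z') = lam z * QH ab.2 b' := by
          intro z hz
          have hz2 : g z.2 = ab.2 := ((Finset.mem_filter.1 hz).2).2
          rw [sum_filter_and_left (fun z' : U × V => g z'.2 = b') (fun z' => f z'.1) _,
            ← Finset.mul_sum, hRzcol z b', hz2]
        rw [Finset.sum_congr rfl inner, ← Finset.sum_mul]
      rw [this, mul_comm, mul_div_assoc, div_self hab, mul_one]
  · -- total mass
    rw [hlamH']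
    simp only
    simp_rw [fib_eq]
    rw [Finset.sum_fiberwise Finset.univ (fun z : U × V => (f z.1, g z.2)) lam]
    exact hlsum
  · -- stationarity
    intro ab'
    rw [Finset.sum_congr rfl (fun ab _ => hmul ab ab')]
    rw [hnum]
    simp only
    simp_rw [fib_eq]
    rw [Finset.sum_fiberwise Finset.univ (fun z : U × V => (f z.1, g z.2))
      (fun z => ∑ z' ∈ Finset.univ.filter (fun z' : U × V => (f z'.1, g z'.2) = ab'), lam z * R z z')]
    rw [Finset.sum_comm]
    have : ∀ z' ∈ Finset.univ.filter (fun z' : U × V => (f z'.1, g z'.2) = ab'),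
        (∑ z : U × V, lam z * R z z') = lam z' := fun z' _ => hlstat z'
    rw [Finset.sum_congr rfl this]
    simp only [hlamH', fib_eq]
  · -- A-marginal
    intro a
    rw [hlamH']
    simp only
    rw [sum_filter_and_right (fun z : U × V => f z.1 = a) (fun z => g z.2) lam,
      Finset.sum_filter, Fintype.sum_prod_type]
    have : ∀ u : U, (∑ v : V, if f u = a then lam (u, v) else 0)
        = if f u = a then p u else 0 := by
      intro u
      rw [sum_ite_const_cond, hlmU u]
    rw [Finset.sum_congr rfl (fun u _ => this u), ← Finset.sum_filter, hpushf a]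
  · -- B-marginal
    intro b
    rw [hlamH']
    simp only
    rw [sum_filter_and_left (fun z : U × V => g z.2 = b) (fun z => f z.1) lam,
      Finset.sum_filter, Fintype.sum_prod_type, Finset.sum_comm]
    have : ∀ v : V, (∑ u : U, if g v = b then lam (u, v) else 0)
        = if g v = b then q v else 0 := by
      intro v
      rw [sum_ite_const_cond, hlmV v]
    rw [Finset.sum_congr rfl (fun v _ => this v), ← Finset.sum_filter, hpushg b]
  · -- pushforward of sums
    intro T
    rw [sum_mul_comp_fiber (fun z : U × V => (f z.1, g z.2)) lam T]
    refine Finset.sum_congr rfl fun ab _ => ?_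
    rw [hlamH']
    simp only
    rw [fib_eq]

noncomputable def mstep {ι : Type*} [Fintype ι] (R : ι → ι → ℝ) (μ : ι → ℝ) : ι → ℝ :=
  fun z' => ∑ x, μ x * R x z'

noncomputable def miter {ι : Type*} [Fintype ι] (R : ι → ι → ℝ) (μ0 : ι → ℝ) (n : ℕ) : ι → ℝ :=
  (mstep R)^[n] μ0

noncomputable def mcesaro {ι : Type*} [Fintype ι] (R : ι → ι → ℝ) (μ0 : ι → ℝ) (N : ℕ) : ι → ℝ :=
  fun z => (∑ n ∈ Finset.range (N + 1), miter R μ0 n z) / ((N : ℝ) + 1)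

lemma miter_succ {ι : Type*} [Fintype ι] (R : ι → ι → ℝ) (μ0 : ι → ℝ) (n : ℕ) (z' : ι) :
    miter R μ0 (n + 1) z' = ∑ x, miter R μ0 n x * R x z' := by
  rw [miter, Function.iterate_succ_apply']
  rfl

lemma mcesaro_key {ι : Type*} [Fintype ι] (R : ι → ι → ℝ) (μ0 : ι → ℝ) (N : ℕ) (z' : ι) :
    ∑ x, mcesaro R μ0 N x * R x z'
      = mcesaro R μ0 N z' + (miter R μ0 (N + 1) z' - miter R μ0 0 z') / ((N : ℝ) + 1) := by
  have h1 : ∀ x, mcesaro R μ0 N x * R x z'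
      = (∑ n ∈ Finset.range (N + 1), miter R μ0 n x * R x z') / ((N : ℝ) + 1) := by
    intro x
    rw [mcesaro, div_mul_eq_mul_div, Finset.sum_mul]
  rw [Finset.sum_congr rfl (fun x _ => h1 x), ← Finset.sum_div, Finset.sum_comm]
  rw [Finset.sum_congr rfl (fun n _ => (miter_succ R μ0 n z').symm)]
  have h3 : ∑ n ∈ Finset.range (N + 1), miter R μ0 (n + 1) z'
      = ∑ n ∈ Finset.range (N + 1), miter R μ0 n z'
        + miter R μ0 (N + 1) z' - miter R μ0 0 z' := by
    have ha := Finset.sum_range_succ' (fun n => miter R μ0 n z') (N + 1)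
    have hb := Finset.sum_range_succ (fun n => miter R μ0 n z') (N + 1)
    linarith
  rw [h3, mcesaro]
  ring

lemma mcesaro_fixed {ι : Type*} [Fintype ι] (R : ι → ι → ℝ) (μ0 : ι → ℝ)
    (hbd : ∀ n z, miter R μ0 n z ∈ Set.Icc (0 : ℝ) 1) :
    ∃ (L : ι → ℝ) (φ : ℕ → ℕ), StrictMono φ ∧
      Filter.Tendsto (fun N => mcesaro R μ0 (φ N)) Filter.atTop (nhds L) ∧
      ∀ z', ∑ x, L x * R x z' = L z' := by
  have hK : IsCompact (Set.pi Set.univ (fun _ : ι => Set.Icc (0 : ℝ) 1)) :=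
    isCompact_univ_pi fun _ => isCompact_Icc
  have hmem : ∀ N, (fun N => mcesaro R μ0 N) N ∈ Set.pi Set.univ (fun _ : ι => Set.Icc (0 : ℝ) 1) := by
    intro N
    intro z _
    have hpos : (0 : ℝ) < (N : ℝ) + 1 := by positivity
    show mcesaro R μ0 N z ∈ Set.Icc (0 : ℝ) 1
    simp only [mcesaro, Set.mem_Icc]
    constructor
    · apply div_nonneg _ hpos.le
      exact Finset.sum_nonneg fun n _ => (hbd n z).1
    · rw [div_le_one hpos]
      calc ∑ n ∈ Finset.range (N + 1), miter R μ0 n z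
          ≤ ∑ _n ∈ Finset.range (N + 1), (1 : ℝ) :=
            Finset.sum_le_sum fun n _ => (hbd n z).2
        _ = (N : ℝ) + 1 := by simp
  obtain ⟨L, _hL, φ, hφ, hconv⟩ := hK.tendsto_subseq hmem
  have hpt : ∀ z, Filter.Tendsto (fun N => mcesaro R μ0 (φ N) z) Filter.atTop (nhds (L z)) :=
    fun z => tendsto_pi_nhds.1 hconv z
  refine ⟨L, φ, hφ, hconv, fun z' => ?_⟩
  have hA : Filter.Tendsto (fun N => ∑ x, mcesaro R μ0 (φ N) x * R x z') Filter.atTop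
      (nhds (∑ x, L x * R x z')) :=
    tendsto_finset_sum _ fun x _ => (hpt x).mul_const _
  have hA' : Filter.Tendsto (fun N => mcesaro R μ0 (φ N) z'
      + (miter R μ0 (φ N + 1) z' - miter R μ0 0 z') / ((φ N : ℝ) + 1)) Filter.atTop
      (nhds (∑ x, L x * R x z')) := by
    have := funext fun N => mcesaro_key R μ0 (φ N) z'
    exact this ▸ hA
  have herr : Filter.Tendsto
      (fun N => (miter R μ0 (φ N + 1) z' - miter R μ0 0 z') / ((φ N : ℝ) + 1))
      Filter.atTop (nhds 0) := by
    apply squeeze_zero_norm (a := fun N : ℕ => 2 / ((N : ℝ) + 1))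
    · intro N
      have hb1 := hbd (φ N + 1) z'
      have hb0 := hbd 0 z'
      have habs : |miter R μ0 (φ N + 1) z' - miter R μ0 0 z'| ≤ 2 := by
        rw [abs_le]
        constructor
        · linarith [hb1.1, hb0.2]
        · linarith [hb1.2, hb0.1]
      have hphi : (N : ℝ) + 1 ≤ (φ N : ℝ) + 1 := by
        have h5 : N ≤ φ N := hφ.le_apply
        exact_mod_cast Nat.succ_le_succ h5
      rw [Real.norm_eq_abs, abs_div, abs_of_pos (by positivity : (0:ℝ) < (φ N : ℝ) + 1)]
      exact div_le_div₀ (by norm_num) habs (by positivity) hphi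
    · simpa [div_eq_mul_inv] using tendsto_one_div_add_atTop_nhds_zero_nat.const_mul (2 : ℝ)
  have hB : Filter.Tendsto (fun N => mcesaro R μ0 (φ N) z'
      + (miter R μ0 (φ N + 1) z' - miter R μ0 0 z') / ((φ N : ℝ) + 1)) Filter.atTop
      (nhds (L z' + 0)) := (hpt z').add herr
  have heq := tendsto_nhds_unique hA' hB
  rw [heq, add_zero]

lemma lift_inner {U V A B : Type*} [Fintype U] [Fintype V] [Fintype A] [Fintype B]
    [DecidableEq A] [DecidableEq B]
    (P : U → U → ℝ) (Q : V → V → ℝ)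
    (f : U → A) (g : V → B) (p : U → ℝ) (q : V → ℝ)
    (lamH : A × B → ℝ) (RH : A × B → A × B → ℝ)
    (hpnn : ∀ u, 0 ≤ p u) (hpsum : ∑ u, p u = 1)
    (hpstat : ∀ u', ∑ u, p u * P u u' = p u')
    (hqstat : ∀ v', ∑ v, q v * Q v v' = q v')
    (hlamHstat : ∀ ab : A × B, ∑ ab0 : A × B, lamH ab0 * RH ab0 ab = lamH ab)
    (R : U × V → U × V → ℝ)
    (hRnn : ∀ z z', 0 ≤ R z z')
    (hRrow : ∀ (z : U × V) (u' : U), ∑ v' : V, R z (u', v') = P z.1 u')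
    (hRcol : ∀ (z : U × V) (v' : V), ∑ u' : U, R z (u', v') = Q z.2 v')
    (hRlump : ∀ (z : U × V) (ab : A × B),
      ∑ z' ∈ Finset.univ.filter (fun z' : U × V => f z'.1 = ab.1 ∧ g z'.2 = ab.2), R z z'
        = RH (f z.1, g z.2) ab)
    (lam0 : U × V → ℝ)
    (hl0nn : ∀ z, 0 ≤ lam0 z)
    (hl0mU : ∀ u, ∑ v, lam0 (u, v) = p u)
    (hl0mV : ∀ v, ∑ u, lam0 (u, v) = q v)
    (hl0push : ∀ ab : A × B,
      ∑ z ∈ Finset.univ.filter (fun z : U × V => f z.1 = ab.1 ∧ g z.2 = ab.2), lam0 z = lamH ab) :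
    ∃ lam : U × V → ℝ,
      IsTCStat P Q p q lam R ∧
      ∀ ab : A × B,
        ∑ z ∈ Finset.univ.filter (fun z : U × V => f z.1 = ab.1 ∧ g z.2 = ab.2), lam z = lamH ab := by
  have fib_eq : ∀ ab : A × B,
      Finset.univ.filter (fun z : U × V => f z.1 = ab.1 ∧ g z.2 = ab.2)
        = Finset.univ.filter (fun z : U × V => (f z.1, g z.2) = ab) := by
    intro ab
    apply Finset.filter_congr
    intro z _
    simp [Prod.ext_iff]
  -- goodness is preserved by one step
  have hstep : ∀ μ : U × V → ℝ,
      ((∀ z, 0 ≤ μ z) ∧ (∀ u, ∑ v, μ (u, v) = p u) ∧ (∀ v, ∑ u, μ (u, v) = q v) ∧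
        (∀ ab : A × B, ∑ z ∈ Finset.univ.filter
          (fun z : U × V => f z.1 = ab.1 ∧ g z.2 = ab.2), μ z = lamH ab)) →
      ((∀ z, 0 ≤ mstep R μ z) ∧ (∀ u, ∑ v, mstep R μ (u, v) = p u) ∧
        (∀ v, ∑ u, mstep R μ (u, v) = q v) ∧
        (∀ ab : A × B, ∑ z ∈ Finset.univ.filter
          (fun z : U × V => f z.1 = ab.1 ∧ g z.2 = ab.2), mstep R μ z = lamH ab)) := by
    rintro μ ⟨hnn, hmU, hmV, hpush⟩
    refine ⟨?_, ?_, ?_, ?_⟩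
    · intro z
      exact Finset.sum_nonneg fun x _ => mul_nonneg (hnn x) (hRnn x z)
    · intro u'
      simp only [mstep]
      rw [Finset.sum_comm]
      have h1 : ∀ z : U × V, ∑ v', μ z * R z (u', v') = μ z * P z.1 u' := by
        intro z
        rw [← Finset.mul_sum, hRrow]
      rw [Finset.sum_congr rfl fun z _ => h1 z, Fintype.sum_prod_type]
      have h2 : ∀ u : U, ∑ v, μ (u, v) * P u u' = p u * P u u' := by
        intro u
        rw [← Finset.sum_mul, hmU]
      rw [Finset.sum_congr rfl fun u _ => h2 u, hpstat]
    · intro v'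
      simp only [mstep]
      rw [Finset.sum_comm]
      have h1 : ∀ z : U × V, ∑ u', μ z * R z (u', v') = μ z * Q z.2 v' := by
        intro z
        rw [← Finset.mul_sum, hRcol]
      rw [Finset.sum_congr rfl fun z _ => h1 z, Fintype.sum_prod_type, Finset.sum_comm]
      have h2 : ∀ v : V, ∑ u, μ (u, v) * Q v v' = q v * Q v v' := by
        intro v
        rw [← Finset.sum_mul, hmV]
      rw [Finset.sum_congr rfl fun v _ => h2 v, hqstat]
    · intro ab
      simp only [mstep]
      rw [Finset.sum_comm]
      have h1 : ∀ z : U × V,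
          (∑ z' ∈ Finset.univ.filter (fun z' : U × V => f z'.1 = ab.1 ∧ g z'.2 = ab.2),
            μ z * R z z') = μ z * RH (f z.1, g z.2) ab := by
        intro z
        rw [← Finset.mul_sum, hRlump]
      rw [Finset.sum_congr rfl fun z _ => h1 z,
        sum_mul_comp_fiber (fun z : U × V => (f z.1, g z.2)) μ (fun ab0 => RH ab0 ab)]
      have h2 : ∀ ab0 : A × B,
          (∑ z ∈ Finset.univ.filter (fun z : U × V => (f z.1, g z.2) = ab0), μ z) * RH ab0 ab
            = lamH ab0 * RH ab0 ab := by
        intro ab0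
        rw [← fib_eq, hpush]
      rw [Finset.sum_congr rfl fun ab0 _ => h2 ab0, hlamHstat]
  -- goodness of all iterates
  have hGood : ∀ n, (∀ z, 0 ≤ miter R lam0 n z) ∧ (∀ u, ∑ v, miter R lam0 n (u, v) = p u) ∧
      (∀ v, ∑ u, miter R lam0 n (u, v) = q v) ∧
      (∀ ab : A × B, ∑ z ∈ Finset.univ.filter
        (fun z : U × V => f z.1 = ab.1 ∧ g z.2 = ab.2), miter R lam0 n z = lamH ab) := by
    intro n
    induction n with
    | zero => exact ⟨hl0nn, hl0mU, hl0mV, hl0push⟩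
    | succ n ih =>
      have : miter R lam0 (n + 1) = mstep R (miter R lam0 n) := by
        rw [miter, Function.iterate_succ_apply']
        rfl
      rw [this]
      exact hstep _ ih
  have hple1 : ∀ u, p u ≤ 1 := by
    intro u
    rw [← hpsum]
    exact Finset.single_le_sum (fun x _ => hpnn x) (Finset.mem_univ u)
  have hbd : ∀ n z, miter R lam0 n z ∈ Set.Icc (0 : ℝ) 1 := by
    intro n z
    obtain ⟨hnn, hmU, _, _⟩ := hGood n
    refine ⟨hnn z, ?_⟩
    have h1 : miter R lam0 n (z.1, z.2) ≤ ∑ v, miter R lam0 n (z.1, v) :=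
      Finset.single_le_sum (fun v _ => hnn (z.1, v)) (Finset.mem_univ z.2)
    rw [hmU z.1] at h1
    calc miter R lam0 n z = miter R lam0 n (z.1, z.2) := by rw [Prod.mk.eta]
      _ ≤ p z.1 := h1
      _ ≤ 1 := hple1 z.1
  obtain ⟨L, φ, hφ, hconv, hLstat⟩ := mcesaro_fixed R lam0 hbd
  have hNe : ∀ N : ℕ, ((N : ℝ) + 1) ≠ 0 := fun N => by positivity
  -- goodness of cesaro averages
  have hcnn : ∀ N z, 0 ≤ mcesaro R lam0 N z := by
    intro N z
    apply div_nonneg _ (by positivity)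
    exact Finset.sum_nonneg fun n _ => (hGood n).1 z
  have hcmU : ∀ N u, ∑ v, mcesaro R lam0 N (u, v) = p u := by
    intro N u
    simp only [mcesaro]
    rw [← Finset.sum_div, Finset.sum_comm]
    rw [Finset.sum_congr rfl fun n _ => (hGood n).2.1 u]
    rw [Finset.sum_const, Finset.card_range, nsmul_eq_mul]
    field_simp
    push_cast; ring
  have hcmV : ∀ N v, ∑ u, mcesaro R lam0 N (u, v) = q v := by
    intro N v
    simp only [mcesaro]
    rw [← Finset.sum_div, Finset.sum_comm]
    rw [Finset.sum_congr rfl fun n _ => (hGood n).2.2.1 v]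
    rw [Finset.sum_const, Finset.card_range, nsmul_eq_mul]
    field_simp
    push_cast; ring
  have hcpush : ∀ N (ab : A × B), ∑ z ∈ Finset.univ.filter
      (fun z : U × V => f z.1 = ab.1 ∧ g z.2 = ab.2), mcesaro R lam0 N z = lamH ab := by
    intro N ab
    simp only [mcesaro]
    rw [← Finset.sum_div, Finset.sum_comm]
    rw [Finset.sum_congr rfl fun n _ => (hGood n).2.2.2 ab]
    rw [Finset.sum_const, Finset.card_range, nsmul_eq_mul]
    field_simp
    push_cast; ring
  -- pass to the limit
  have hpt : ∀ z, Filter.Tendsto (fun N => mcesaro R lam0 (φ N) z) Filter.atTop (nhds (L z)) :=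
    fun z => tendsto_pi_nhds.1 hconv z
  have hLnn : ∀ z, 0 ≤ L z := fun z => ge_of_tendsto' (hpt z) fun N => hcnn (φ N) z
  have hLmU : ∀ u, ∑ v, L (u, v) = p u := by
    intro u
    have h1 : Filter.Tendsto (fun N => ∑ v, mcesaro R lam0 (φ N) (u, v)) Filter.atTop
        (nhds (∑ v, L (u, v))) := tendsto_finset_sum _ fun v _ => hpt (u, v)
    have h2 : (fun N => ∑ v, mcesaro R lam0 (φ N) (u, v)) = fun _ => p u :=
      funext fun N => hcmU (φ N) u
    rw [h2] at h1
    exact tendsto_nhds_unique h1 tendsto_const_nhds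
  have hLmV : ∀ v, ∑ u, L (u, v) = q v := by
    intro v
    have h1 : Filter.Tendsto (fun N => ∑ u, mcesaro R lam0 (φ N) (u, v)) Filter.atTop
        (nhds (∑ u, L (u, v))) := tendsto_finset_sum _ fun u _ => hpt (u, v)
    have h2 : (fun N => ∑ u, mcesaro R lam0 (φ N) (u, v)) = fun _ => q v :=
      funext fun N => hcmV (φ N) v
    rw [h2] at h1
    exact tendsto_nhds_unique h1 tendsto_const_nhds
  have hLpush : ∀ ab : A × B, ∑ z ∈ Finset.univ.filter
      (fun z : U × V => f z.1 = ab.1 ∧ g z.2 = ab.2), L z = lamH ab := by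
    intro ab
    have h1 : Filter.Tendsto (fun N => ∑ z ∈ Finset.univ.filter
        (fun z : U × V => f z.1 = ab.1 ∧ g z.2 = ab.2), mcesaro R lam0 (φ N) z) Filter.atTop
        (nhds (∑ z ∈ Finset.univ.filter
          (fun z : U × V => f z.1 = ab.1 ∧ g z.2 = ab.2), L z)) :=
      tendsto_finset_sum _ fun z _ => hpt z
    have h2 : (fun N => ∑ z ∈ Finset.univ.filter
        (fun z : U × V => f z.1 = ab.1 ∧ g z.2 = ab.2), mcesaro R lam0 (φ N) z)
        = fun _ => lamH ab := funext fun N => hcpush (φ N) ab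
    rw [h2] at h1
    exact tendsto_nhds_unique h1 tendsto_const_nhds
  have hLsum : ∑ z : U × V, L z = 1 := by
    rw [Fintype.sum_prod_type]
    rw [Finset.sum_congr rfl fun u _ => hLmU u]
    exact hpsum
  exact ⟨L, ⟨hRnn, hRrow, hRcol, hLnn, hLsum, hLstat, hLmU, hLmV⟩, hLpush⟩

lemma lift_TC {U V A B : Type*} [Fintype U] [Fintype V] [Fintype A] [Fintype B]
    [DecidableEq A] [DecidableEq B]
    (P : U → U → ℝ) (Q : V → V → ℝ) (PH : A → A → ℝ) (QH : B → B → ℝ)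
    (f : U → A) (g : V → B) (p : U → ℝ) (q : V → ℝ) (pH : A → ℝ) (qH : B → ℝ)
    (hPnn : ∀ u u', 0 ≤ P u u') (hQnn : ∀ v v', 0 ≤ Q v v')
    (hPHnn : ∀ a a', 0 ≤ PH a a') (hQHnn : ∀ b b', 0 ≤ QH b b')
    (hffac : ∀ (u : U) (a' : A),
      ∑ u' ∈ Finset.univ.filter (fun u' => f u' = a'), P u u' = PH (f u) a')
    (hgfac : ∀ (v : V) (b' : B),
      ∑ v' ∈ Finset.univ.filter (fun v' => g v' = b'), Q v v' = QH (g v) b')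
    (hpnn : ∀ u, 0 ≤ p u) (hpsum : ∑ u, p u = 1)
    (hpstat : ∀ u', ∑ u, p u * P u u' = p u')
    (hqnn : ∀ v, 0 ≤ q v)
    (hqstat : ∀ v', ∑ v, q v * Q v v' = q v')
    (hpushf : ∀ a, ∑ u ∈ Finset.univ.filter (fun u => f u = a), p u = pH a)
    (hpushg : ∀ b, ∑ v ∈ Finset.univ.filter (fun v => g v = b), q v = qH b)
    (lamH : A × B → ℝ) (RH : A × B → A × B → ℝ)
    (h : IsTCStat PH QH pH qH lamH RH) :
    ∃ (lam : U × V → ℝ) (R : U × V → U × V → ℝ),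
      IsTCStat P Q p q lam R ∧
      (∀ ab : A × B, ∑ z ∈ Finset.univ.filter
        (fun z : U × V => f z.1 = ab.1 ∧ g z.2 = ab.2), lam z = lamH ab) ∧
      (∀ (z : U × V) (ab : A × B), ∑ z' ∈ Finset.univ.filter
        (fun z' : U × V => f z'.1 = ab.1 ∧ g z'.2 = ab.2), R z z' = RH (f z.1, g z.2) ab) := by
  obtain ⟨hRHnn, hRHrow, hRHcol, hlamHnn, hlamHsum, hlamHstat, hlamHmA, hlamHmB⟩ := h
  -- vanishing lemmas
  have hPz : ∀ u u', PH (f u) (f u') = 0 → P u u' = 0 := by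
    intro u u' h0
    have hs := hffac u (f u')
    rw [h0] at hs
    exact (Finset.sum_eq_zero_iff_of_nonneg (fun x _ => hPnn u x)).1 hs u'
      (Finset.mem_filter.2 ⟨Finset.mem_univ _, rfl⟩)
  have hQz : ∀ v v', QH (g v) (g v') = 0 → Q v v' = 0 := by
    intro v v' h0
    have hs := hgfac v (g v')
    rw [h0] at hs
    exact (Finset.sum_eq_zero_iff_of_nonneg (fun x _ => hQnn v x)).1 hs v'
      (Finset.mem_filter.2 ⟨Finset.mem_univ _, rfl⟩)
  have hpz : ∀ u, pH (f u) = 0 → p u = 0 := by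
    intro u h0
    have hs := hpushf (f u)
    rw [h0] at hs
    exact (Finset.sum_eq_zero_iff_of_nonneg (fun x _ => hpnn x)).1 hs u
      (Finset.mem_filter.2 ⟨Finset.mem_univ _, rfl⟩)
  have hqz : ∀ v, qH (g v) = 0 → q v = 0 := by
    intro v h0
    have hs := hpushg (g v)
    rw [h0] at hs
    exact (Finset.sum_eq_zero_iff_of_nonneg (fun x _ => hqnn x)).1 hs v
      (Finset.mem_filter.2 ⟨Finset.mem_univ _, rfl⟩)
  have hRHzP : ∀ (a : A) (b : B) (a' : A) (b' : B), PH a a' = 0 → RH (a, b) (a', b') = 0 := by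
    intro a b a' b' h0
    have hs := hRHrow (a, b) a'
    rw [h0] at hs
    exact (Finset.sum_eq_zero_iff_of_nonneg (fun x _ => hRHnn (a, b) (a', x))).1 hs b'
      (Finset.mem_univ _)
  have hRHzQ : ∀ (a : A) (b : B) (a' : A) (b' : B), QH b b' = 0 → RH (a, b) (a', b') = 0 := by
    intro a b a' b' h0
    have hs := hRHcol (a, b) b'
    rw [h0] at hs
    exact (Finset.sum_eq_zero_iff_of_nonneg (fun x _ => hRHnn (a, b) (x, b'))).1 hs a'
      (Finset.mem_univ _)
  have hlamHzP : ∀ (a : A) (b : B), pH a = 0 → lamH (a, b) = 0 := by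
    intro a b h0
    have hs := hlamHmA a
    rw [h0] at hs
    exact (Finset.sum_eq_zero_iff_of_nonneg (fun x _ => hlamHnn (a, x))).1 hs b
      (Finset.mem_univ _)
  have hlamHzQ : ∀ (a : A) (b : B), qH b = 0 → lamH (a, b) = 0 := by
    intro a b h0
    have hs := hlamHmB b
    rw [h0] at hs
    exact (Finset.sum_eq_zero_iff_of_nonneg (fun x _ => hlamHnn (x, b))).1 hs a
      (Finset.mem_univ _)
  -- the lifted kernel
  have hRnn : ∀ z z' : U × V, 0 ≤ RH (f z.1, g z.2) (f z'.1, g z'.2) *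
      (d0 (P z.1 z'.1) (PH (f z.1) (f z'.1)) * d0 (Q z.2 z'.2) (QH (g z.2) (g z'.2))) :=
    fun z z' => mul_nonneg (hRHnn _ _) (mul_nonneg
      (d0_nonneg (hPnn _ _) (hPHnn _ _)) (d0_nonneg (hQnn _ _) (hQHnn _ _)))
  have hRrow : ∀ (z : U × V) (u' : U),
      (∑ v' : V, RH (f z.1, g z.2) (f u', g v') *
        (d0 (P z.1 u') (PH (f z.1) (f u')) * d0 (Q z.2 v') (QH (g z.2) (g v'))))
      = P z.1 u' := by
    intro z u'
    calc ∑ v' : V, RH (f z.1, g z.2) (f u', g v') *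
          (d0 (P z.1 u') (PH (f z.1) (f u')) * d0 (Q z.2 v') (QH (g z.2) (g v')))
        = ∑ v' : V, (RH (f z.1, g z.2) (f u', g v') * d0 (P z.1 u') (PH (f z.1) (f u'))) *
            d0 (Q z.2 v') (QH (g z.2) (g v')) :=
          Finset.sum_congr rfl fun v' _ => by ring
      _ = ∑ b : B, RH (f z.1, g z.2) (f u', b) * d0 (P z.1 u') (PH (f z.1) (f u')) :=
          sum_mul_d0_fiber g
            (fun b => RH (f z.1, g z.2) (f u', b) * d0 (P z.1 u') (PH (f z.1) (f u')))
            (Q z.2) (QH (g z.2)) (hgfac z.2)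
            (fun b hb => by simp only [hRHzQ (f z.1) (g z.2) (f u') b hb, zero_mul])
      _ = (∑ b : B, RH (f z.1, g z.2) (f u', b)) * d0 (P z.1 u') (PH (f z.1) (f u')) :=
          (Finset.sum_mul _ _ _).symm
      _ = PH (f z.1) (f u') * d0 (P z.1 u') (PH (f z.1) (f u')) := by rw [hRHrow]
      _ = P z.1 u' := by rw [mul_comm]; exact d0_mul_cancel (hPz z.1 u')
  have hRcol : ∀ (z : U × V) (v' : V),
      (∑ u' : U, RH (f z.1, g z.2) (f u', g v') *
        (d0 (P z.1 u') (PH (f z.1) (f u')) * d0 (Q z.2 v') (QH (g z.2) (g v'))))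
      = Q z.2 v' := by
    intro z v'
    calc ∑ u' : U, RH (f z.1, g z.2) (f u', g v') *
          (d0 (P z.1 u') (PH (f z.1) (f u')) * d0 (Q z.2 v') (QH (g z.2) (g v')))
        = ∑ u' : U, (RH (f z.1, g z.2) (f u', g v') * d0 (Q z.2 v') (QH (g z.2) (g v'))) *
            d0 (P z.1 u') (PH (f z.1) (f u')) :=
          Finset.sum_congr rfl fun u' _ => by ring
      _ = ∑ a : A, RH (f z.1, g z.2) (a, g v') * d0 (Q z.2 v') (QH (g z.2) (g v')) :=
          sum_mul_d0_fiber f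
            (fun a => RH (f z.1, g z.2) (a, g v') * d0 (Q z.2 v') (QH (g z.2) (g v')))
            (P z.1) (PH (f z.1)) (hffac z.1)
            (fun a ha => by simp only [hRHzP (f z.1) (g z.2) a (g v') ha, zero_mul])
      _ = (∑ a : A, RH (f z.1, g z.2) (a, g v')) * d0 (Q z.2 v') (QH (g z.2) (g v')) :=
          (Finset.sum_mul _ _ _).symm
      _ = QH (g z.2) (g v') * d0 (Q z.2 v') (QH (g z.2) (g v')) := by rw [hRHcol]
      _ = Q z.2 v' := by rw [mul_comm]; exact d0_mul_cancel (hQz z.2 v')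
  have hRlump : ∀ (z : U × V) (ab : A × B),
      (∑ z' ∈ Finset.univ.filter (fun z' : U × V => f z'.1 = ab.1 ∧ g z'.2 = ab.2),
        RH (f z.1, g z.2) (f z'.1, g z'.2) *
          (d0 (P z.1 z'.1) (PH (f z.1) (f z'.1)) * d0 (Q z.2 z'.2) (QH (g z.2) (g z'.2))))
      = RH (f z.1, g z.2) ab := by
    intro z ab
    have := sum_fiber_prod_d0 f g (fun a b => RH (f z.1, g z.2) (a, b))
      (P z.1) (PH (f z.1)) (Q z.2) (QH (g z.2)) (hffac z.1) (hgfac z.2) ab.1 ab.2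
      (fun h0 => hRHzP _ _ _ _ h0) (fun h0 => hRHzQ _ _ _ _ h0)
    simpa using this
  -- the initial lifted measure
  have hl0nn : ∀ z : U × V, 0 ≤ lamH (f z.1, g z.2) *
      (d0 (p z.1) (pH (f z.1)) * d0 (q z.2) (qH (g z.2))) :=
    fun z => mul_nonneg (hlamHnn _) (mul_nonneg
      (d0_nonneg (hpnn _) (by
        rw [← hpushf (f z.1)]
        exact Finset.sum_nonneg fun x _ => hpnn x))
      (d0_nonneg (hqnn _) (by
        rw [← hpushg (g z.2)]
        exact Finset.sum_nonneg fun x _ => hqnn x)))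
  have hl0mU : ∀ u : U,
      (∑ v : V, lamH (f u, g v) * (d0 (p u) (pH (f u)) * d0 (q v) (qH (g v)))) = p u := by
    intro u
    calc ∑ v : V, lamH (f u, g v) * (d0 (p u) (pH (f u)) * d0 (q v) (qH (g v)))
        = ∑ v : V, (lamH (f u, g v) * d0 (p u) (pH (f u))) * d0 (q v) (qH (g v)) :=
          Finset.sum_congr rfl fun v _ => by ring
      _ = ∑ b : B, lamH (f u, b) * d0 (p u) (pH (f u)) :=
          sum_mul_d0_fiber g
            (fun b => lamH (f u, b) * d0 (p u) (pH (f u))) q qH hpushg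
            (fun b hb => by simp only [hlamHzQ (f u) b hb, zero_mul])
      _ = (∑ b : B, lamH (f u, b)) * d0 (p u) (pH (f u)) := (Finset.sum_mul _ _ _).symm
      _ = pH (f u) * d0 (p u) (pH (f u)) := by rw [hlamHmA]
      _ = p u := by rw [mul_comm]; exact d0_mul_cancel (hpz u)
  have hl0mV : ∀ v : V,
      (∑ u : U, lamH (f u, g v) * (d0 (p u) (pH (f u)) * d0 (q v) (qH (g v)))) = q v := by
    intro v
    calc ∑ u : U, lamH (f u, g v) * (d0 (p u) (pH (f u)) * d0 (q v) (qH (g v)))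
        = ∑ u : U, (lamH (f u, g v) * d0 (q v) (qH (g v))) * d0 (p u) (pH (f u)) :=
          Finset.sum_congr rfl fun u _ => by ring
      _ = ∑ a : A, lamH (a, g v) * d0 (q v) (qH (g v)) :=
          sum_mul_d0_fiber f
            (fun a => lamH (a, g v) * d0 (q v) (qH (g v))) p pH hpushf
            (fun a ha => by simp only [hlamHzP a (g v) ha, zero_mul])
      _ = (∑ a : A, lamH (a, g v)) * d0 (q v) (qH (g v)) := (Finset.sum_mul _ _ _).symm
      _ = qH (g v) * d0 (q v) (qH (g v)) := by rw [hlamHmB]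
      _ = q v := by rw [mul_comm]; exact d0_mul_cancel (hqz v)
  have hl0push : ∀ ab : A × B,
      (∑ z ∈ Finset.univ.filter (fun z : U × V => f z.1 = ab.1 ∧ g z.2 = ab.2),
        lamH (f z.1, g z.2) * (d0 (p z.1) (pH (f z.1)) * d0 (q z.2) (qH (g z.2))))
      = lamH ab := by
    intro ab
    have := sum_fiber_prod_d0 f g (fun a b => lamH (a, b)) p pH q qH hpushf hpushg ab.1 ab.2
      (fun h0 => hlamHzP _ _ h0) (fun h0 => hlamHzQ _ _ h0)
    simpa using this
  obtain ⟨lam, hTC, hpush⟩ := lift_inner P Q f g p q lamH RH hpnn hpsum hpstat hqstat hlamHstat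
    (fun z z' => RH (f z.1, g z.2) (f z'.1, g z'.2) *
      (d0 (P z.1 z'.1) (PH (f z.1) (f z'.1)) * d0 (Q z.2 z'.2) (QH (g z.2) (g z'.2))))
    hRnn hRrow hRcol hRlump
    (fun z => lamH (f z.1, g z.2) * (d0 (p z.1) (pH (f z.1)) * d0 (q z.2) (qH (g z.2))))
    hl0nn hl0mU hl0mV hl0push
  exact ⟨lam, _, hTC, hpush, hRlump⟩

lemma fib_filter_eq {U V A B : Type*} [Fintype U] [Fintype V] [DecidableEq A] [DecidableEq B]
    (f : U → A) (g : V → B) (ab : A × B) :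
    Finset.univ.filter (fun z : U × V => f z.1 = ab.1 ∧ g z.2 = ab.2)
      = Finset.univ.filter (fun z : U × V => (f z.1, g z.2) = ab) := by
  apply Finset.filter_congr
  intro z _
  simp [Prod.ext_iff]

end FactorHelpers

/-- Let `f : U → A` and `g : V → B` be factor maps from `G₁` to `H₁` and
from `G₂` to `H₂`, with costs satisfying `c_ext(u,v) = c(f(u), g(v))`.  Then the optimal
transition coupling costs agree, and every optimal transition coupling `(W̃,Z̃)` of `W`
and `Z` lifts to an optimal transition coupling `(X̃,Ỹ)` of `X` and `Y` with
`(f(X̃), g(Ỹ))` equal in distribution to `(W̃,Z̃)` (equality of all finite-dimensional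
distributions of the pushed process with those of the Markov chain `(lamH, RH)`). -/
theorem factor_optimal_costs_agree_and_lift
    {U V A B : Type*} [Fintype U] [Fintype V] [Fintype A] [Fintype B]
    [DecidableEq U] [DecidableEq V] [DecidableEq A] [DecidableEq B]
    (P : U → U → ℝ) (Q : V → V → ℝ) (PH : A → A → ℝ) (QH : B → B → ℝ)
    (f : U → A) (g : V → B)
    (p : U → ℝ) (q : V → ℝ) (pH : A → ℝ) (qH : B → ℝ)
    (c : A → B → ℝ)
    (hPnn : ∀ u u', 0 ≤ P u u') (hProw : ∀ u, ∑ u', P u u' = 1)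
    (hQnn : ∀ v v', 0 ≤ Q v v') (hQrow : ∀ v, ∑ v', Q v v' = 1)
    (hPHnn : ∀ a a', 0 ≤ PH a a') (hPHrow : ∀ a, ∑ a', PH a a' = 1)
    (hQHnn : ∀ b b', 0 ≤ QH b b') (hQHrow : ∀ b, ∑ b', QH b b' = 1)
    (hffac : ∀ (u : U) (a' : A),
      ∑ u' ∈ Finset.univ.filter (fun u' => f u' = a'), P u u' = PH (f u) a')
    (hgfac : ∀ (v : V) (b' : B),
      ∑ v' ∈ Finset.univ.filter (fun v' => g v' = b'), Q v v' = QH (g v) b')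
    (hpnn : ∀ u, 0 ≤ p u) (hpsum : ∑ u, p u = 1)
    (hpstat : ∀ u', ∑ u, p u * P u u' = p u')
    (hqnn : ∀ v, 0 ≤ q v) (hqsum : ∑ v, q v = 1)
    (hqstat : ∀ v', ∑ v, q v * Q v v' = q v')
    (hpushf : ∀ a, ∑ u ∈ Finset.univ.filter (fun u => f u = a), p u = pH a)
    (hpushg : ∀ b, ∑ v ∈ Finset.univ.filter (fun v => g v = b), q v = qH b) :
    (sInf {x : ℝ | ∃ (lam : U × V → ℝ) (R : U × V → U × V → ℝ),
        IsTCStat P Q p q lam R ∧ x = ∑ z : U × V, lam z * c (f z.1) (g z.2)}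
      = sInf {x : ℝ | ∃ (lamH : A × B → ℝ) (RH : A × B → A × B → ℝ),
        IsTCStat PH QH pH qH lamH RH ∧ x = ∑ ab : A × B, lamH ab * c ab.1 ab.2})
    ∧ ∀ (lamH : A × B → ℝ) (RH : A × B → A × B → ℝ),
        IsTCStat PH QH pH qH lamH RH →
        (∑ ab : A × B, lamH ab * c ab.1 ab.2
          = sInf {x : ℝ | ∃ (lamH' : A × B → ℝ) (RH' : A × B → A × B → ℝ),
              IsTCStat PH QH pH qH lamH' RH' ∧
              x = ∑ ab : A × B, lamH' ab * c ab.1 ab.2}) →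
        ∃ (lam : U × V → ℝ) (R : U × V → U × V → ℝ),
          IsTCStat P Q p q lam R ∧
          (∑ z : U × V, lam z * c (f z.1) (g z.2)
            = sInf {x : ℝ | ∃ (lam' : U × V → ℝ) (R' : U × V → U × V → ℝ),
                IsTCStat P Q p q lam' R' ∧
                x = ∑ z : U × V, lam' z * c (f z.1) (g z.2)}) ∧
          ∀ (n : ℕ) (ab : Fin (n + 1) → A × B),
            ∑ z ∈ Finset.univ.filter
                (fun z : Fin (n + 1) → U × V =>
                  ∀ i, f (z i).1 = (ab i).1 ∧ g (z i).2 = (ab i).2),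
              lam (z 0) * ∏ i : Fin n, R (z i.castSucc) (z i.succ)
            = lamH (ab 0) * ∏ i : Fin n, RH (ab i.castSucc) (ab i.succ) := by
    -- pushing a coupling cost down along the factor maps
  have hcost : ∀ (lam : U × V → ℝ) (lamH : A × B → ℝ),
      (∀ ab : A × B, ∑ z ∈ Finset.univ.filter
        (fun z : U × V => f z.1 = ab.1 ∧ g z.2 = ab.2), lam z = lamH ab) →
      ∑ z : U × V, lam z * c (f z.1) (g z.2) = ∑ ab : A × B, lamH ab * c ab.1 ab.2 := by
    intro lam lamH hpush
    have h1 := sum_mul_comp_fiber (fun z : U × V => (f z.1, g z.2)) lam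
      (fun ab => c ab.1 ab.2)
    simp only at h1
    rw [h1]
    refine Finset.sum_congr rfl fun ab _ => ?_
    rw [← fib_filter_eq f g ab, hpush ab]
  -- the two sets of achievable costs coincide
  have hset : {x : ℝ | ∃ (lam : U × V → ℝ) (R : U × V → U × V → ℝ),
        IsTCStat P Q p q lam R ∧ x = ∑ z : U × V, lam z * c (f z.1) (g z.2)}
      = {x : ℝ | ∃ (lamH : A × B → ℝ) (RH : A × B → A × B → ℝ),
        IsTCStat PH QH pH qH lamH RH ∧ x = ∑ ab : A × B, lamH ab * c ab.1 ab.2} := by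
    ext x
    constructor
    · rintro ⟨lam, R, hTC, rfl⟩
      obtain ⟨lamH', RH', hTC', hpushT⟩ := project_TC P Q PH QH f g p q pH qH
        hPHnn hPHrow hQHnn hQHrow hffac hgfac hpushf hpushg lam R hTC
      refine ⟨lamH', RH', hTC', ?_⟩
      have h2 := hpushT (fun ab => c ab.1 ab.2)
      simpa using h2
    · rintro ⟨lamH, RH, hTC, rfl⟩
      obtain ⟨lam, R, hTC', hpush, _⟩ := lift_TC P Q PH QH f g p q pH qH
        hPnn hQnn hPHnn hQHnn hffac hgfac hpnn hpsum hpstat hqnn hqstat hpushf hpushg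
        lamH RH hTC
      exact ⟨lam, R, hTC', (hcost lam lamH hpush).symm⟩
  constructor
  · rw [hset]
  · intro lamH RH hTC hopt
    obtain ⟨lam, R, hTC', hpush, hlump⟩ := lift_TC P Q PH QH f g p q pH qH
      hPnn hQnn hPHnn hQHnn hffac hgfac hpnn hpsum hpstat hqnn hqstat hpushf hpushg
      lamH RH hTC
    refine ⟨lam, R, hTC', ?_, ?_⟩
    · calc ∑ z : U × V, lam z * c (f z.1) (g z.2)
          = ∑ ab : A × B, lamH ab * c ab.1 ab.2 := hcost lam lamH hpush
        _ = sInf {x : ℝ | ∃ (lamH' : A × B → ℝ) (RH' : A × B → A × B → ℝ),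
              IsTCStat PH QH pH qH lamH' RH' ∧
              x = ∑ ab : A × B, lamH' ab * c ab.1 ab.2} := hopt
        _ = sInf {x : ℝ | ∃ (lam' : U × V → ℝ) (R' : U × V → U × V → ℝ),
              IsTCStat P Q p q lam' R' ∧
              x = ∑ z : U × V, lam' z * c (f z.1) (g z.2)} := by rw [hset]
    · intro n ab
      exact path_push f g R RH hlump n lam lamH hpush ab
end

section
/- If G₂ is a factor of G₁ via factor map f and the cost c is compatible with f, then the NetOTC vertex alignment obtained from the optimal coupling (X, f(X)) is π_v(u,v) = p(u)·1{f(u)=v}, and the edge alignment is π_e((u,u'),(v,v')) = p(u)P(u'|u)·1{f(u)=v, f(u')=v'}; in particular, π_e is supported on pairs ((u,u'),(f(u),f(u'))) with (u,u') an edge of G₁, and (f(u),f(u')) is then necessarily an edge of G₂. -/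
/-- If `G₂` is a factor of `G₁` via factor map `f` and the cost `c` is
compatible with `f`, then the NetOTC vertex alignment obtained from the optimal coupling
`(X, f(X))` is `π_v(u,v) = p(u)·1{f(u)=v}`, and the edge alignment is
`π_e((u,u'),(v,v')) = p(u) P(u'|u)·1{f(u)=v, f(u')=v'}`.  In particular `π_e` is supported
on pairs `((u,u'), (f(u), f(u')))` with `(u,u')` an edge of `G₁` (`P(u'|u) > 0`), and then
`(f(u), f(u'))` is necessarily an edge of `G₂` (`Q(f(u)|f(u')) > 0`). -/
theorem factor_alignment_support
    {U V : Type*} [Fintype U] [Fintype V] [DecidableEq V]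
    (P : U → U → ℝ) (Q : V → V → ℝ) (f : U → V) (p : U → ℝ) (c : U → V → ℝ)
    (hPnn : ∀ u u', 0 ≤ P u u') (hProw : ∀ u, ∑ u', P u u' = 1)
    (hQnn : ∀ v v', 0 ≤ Q v v') (hQrow : ∀ v, ∑ v', Q v v' = 1)
    (hfac : ∀ (u : U) (v' : V),
      ∑ u' ∈ Finset.univ.filter (fun u' => f u' = v'), P u u' = Q (f u) v')
    (hpnn : ∀ u, 0 ≤ p u) (hpsum : ∑ u, p u = 1)
    (hpstat : ∀ u', ∑ u, p u * P u u' = p u')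
    (hcompat : ∀ u v, c u (f u) ≤ c u v) :
    let πv : U → V → ℝ := fun u v => p u * (if f u = v then 1 else 0)
    let πe : U → U → V → V → ℝ := fun u u' v v' =>
      p u * P u u' * (if f u = v ∧ f u' = v' then 1 else 0)
    (∀ u v, πv u v = p u * (if f u = v then 1 else 0)) ∧
    (∀ u u' v v', 0 < πe u u' v v' →
      f u = v ∧ f u' = v' ∧ 0 < P u u' ∧ 0 < Q v v') := by
  intro πv πe
  refine ⟨fun u v => rfl, fun u u' v v' h => ?_⟩
  by_cases hc : f u = v ∧ f u' = v'
  · obtain ⟨h1, h2⟩ := hc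
    simp only [πe, h1, h2, and_self, if_true, mul_one] at h
    have hP : 0 < P u u' := by
      rcases (mul_pos_iff.mp h) with ⟨_, h⟩ | ⟨h', _⟩
      · exact h
      · exact absurd (hpnn u) (not_le.mpr h')
    refine ⟨h1, h2, hP, ?_⟩
    have := hfac u v'
    rw [← h1, ← this]
    have hmem : u' ∈ Finset.univ.filter (fun x => f x = v') := by
      simp [h2]
    exact lt_of_lt_of_le hP (Finset.single_le_sum (fun x _ => hPnn u x) hmem)
  · simp only [πe, if_neg hc, mul_zero] at h
    exact absurd h (lt_irrefl 0)
end
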